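/- arXiv:2009.13880 — 4 statements merged into one kernel-verified Lean document; each statement's English description precedes it below -/
import Mathlib

section
/- The number of colored triangle-free triangulations of a convex n-gon equals n·2^(n-4), for n ≥ 5. -/
section

variable {n : ℕ} [NeZero n]

/-- An (external) edge of the convex polygon with vertices `ZMod n`. -/
def IsPolyEdge (s : Finset (ZMod n)) : Prop := ∃ a : ZMod n, s = {a, a + 1}

/-- A chord (internal edge, diagonal) of the polygon: a pair of distinct,
non-adjacent vertices. -/
def IsChord (s : Finset (ZMod n)) : Prop :=
  ∃ a b : ZMod n, s = {a, b} ∧ a ≠ b ∧ b ≠ a + 1 ∧ a ≠ b + 1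

/-- A short chord connects `i-1` and `i+1` for some vertex `i`. -/
def IsShortChord (s : Finset (ZMod n)) : Prop :=
  ∃ a : ZMod n, s = {a - 1, a + 1}

/-- `x` lies strictly between `a` and `b` in the clockwise cyclic order. -/
def StrictBtw (a b x : ZMod n) : Prop :=
  0 < (x - a).val ∧ (x - a).val < (b - a).val

/-- Two chords of the polygon cross (in the interior). -/
def ChordsCross (s t : Finset (ZMod n)) : Prop :=
  ∃ a b c d : ZMod n, s = {a, b} ∧ t = {c, d} ∧ StrictBtw a b c ∧ StrictBtw b a d

end

/-- A properly labelled (colored) triangle-free triangulation of a convex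
`(n+5)`-gon: `n+2` pairwise distinct pairwise non-crossing chords
`d 0, ..., d (n+1)` (hence a triangulation), with no internal triangle,
such that the chord labelled `0` is short, and in any triangle with exactly two
internal edges the labels of these are consecutive. -/
def IsCTFT {n : ℕ} (d : Fin (n + 2) → Finset (ZMod (n + 5))) : Prop :=
  (∀ i, IsChord (d i)) ∧
  Function.Injective d ∧
  (∀ i j, i ≠ j → ¬ ChordsCross (d i) (d j)) ∧
  (¬ ∃ a b c : ZMod (n + 5),
      (∃ i, d i = {a, b}) ∧ (∃ i, d i = {b, c}) ∧ (∃ i, d i = {a, c})) ∧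
  IsShortChord (d 0) ∧
  (∀ (a b c : ZMod (n + 5)) (i j : Fin (n + 2)), d i = {a, b} → d j = {b, c} →
    IsPolyEdge ({a, c} : Finset (ZMod (n + 5))) → ((i : ℕ) + 1 = j ∨ (j : ℕ) + 1 = i))

namespace CTFT

lemma pair_eq_pair_iff {α} [DecidableEq α] {a b c d : α} :
    ({a, b} : Finset α) = {c, d} ↔ (a = c ∧ b = d) ∨ (a = d ∧ b = c) := by
  simp only [← Finset.coe_inj, Finset.coe_insert, Finset.coe_singleton]
  exact Set.pair_eq_pair_iff

variable {n : ℕ}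

lemma val_cast {p : ℕ} (hp : p < n+5) : ((p : ZMod (n+5))).val = p := ZMod.val_cast_of_lt hp

lemma cast_inj_lt {p q : ℕ} (hp : p < n+5) (hq : q < n+5) : (p : ZMod (n+5)) = q ↔ p = q := by
  constructor
  · intro h; have := congrArg ZMod.val h; rwa [val_cast hp, val_cast hq] at this
  · rintro rfl; rfl

lemma sub_cast_val {p q : ℕ} (hp : p < n+5) (hq : q < n+5) :
    ((p : ZMod (n+5)) - q).val = if q ≤ p then p - q else n+5 + p - q := by
  split_ifs with h
  · have e : (p : ZMod (n+5)) - q = ((p - q : ℕ) : ZMod (n+5)) := by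
      rw [Nat.cast_sub h]
    rw [e, val_cast (by omega)]
  · have e : ((n+5+p-q : ℕ) : ZMod (n+5)) = (p : ZMod (n+5)) - q := by
      rw [Nat.cast_sub (by omega), Nat.cast_add, ZMod.natCast_self]
      ring
    rw [← e, val_cast (by omega)]

lemma strictBtw_shift_iff (z : ZMod (n+5)) {u v w : ℕ} (hu : u < n+5) (hv : v < n+5) (hw : w < n+5) :
    StrictBtw (z + (u : ZMod (n+5))) (z + (v : ZMod (n+5))) (z + (w : ZMod (n+5))) ↔
      (0 < (if u ≤ w then w - u else n+5+w-u) ∧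
        (if u ≤ w then w - u else n+5+w-u) < (if u ≤ v then v - u else n+5+v-u)) := by
  have e1 : (z + (w : ZMod (n+5))) - (z + u) = (w : ZMod (n+5)) - u := by ring
  have e2 : (z + (v : ZMod (n+5))) - (z + u) = (v : ZMod (n+5)) - u := by ring
  unfold StrictBtw
  rw [e1, e2, sub_cast_val hw hu, sub_cast_val hv hu]

lemma chordsCross_shift_iff (z : ZMod (n+5)) {p q r s : ℕ}
    (hq : q < n+5) (hs : s < n+5) (hpq : p < q) (hrs : r < s) :
    ChordsCross ({z + (p : ZMod (n+5)), z + (q : ZMod (n+5))})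
      ({z + (r : ZMod (n+5)), z + (s : ZMod (n+5))}) ↔
      ((p < r ∧ r < q ∧ q < s) ∨ (r < p ∧ p < s ∧ s < q)) := by
  have hp : p < n+5 := by omega
  have hr : r < n+5 := by omega
  constructor
  · rintro ⟨A, B, C, D, h1, h2, hb1, hb2⟩
    rcases pair_eq_pair_iff.mp h1 with ⟨rfl, rfl⟩ | ⟨rfl, rfl⟩ <;>
      rcases pair_eq_pair_iff.mp h2 with ⟨rfl, rfl⟩ | ⟨rfl, rfl⟩
    · rw [strictBtw_shift_iff z hp hq hr] at hb1
      rw [strictBtw_shift_iff z hq hp hs] at hb2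
      split_ifs at hb1 hb2 <;> omega
    · rw [strictBtw_shift_iff z hp hq hs] at hb1
      rw [strictBtw_shift_iff z hq hp hr] at hb2
      split_ifs at hb1 hb2 <;> omega
    · rw [strictBtw_shift_iff z hq hp hr] at hb1
      rw [strictBtw_shift_iff z hp hq hs] at hb2
      split_ifs at hb1 hb2 <;> omega
    · rw [strictBtw_shift_iff z hq hp hs] at hb1
      rw [strictBtw_shift_iff z hp hq hr] at hb2
      split_ifs at hb1 hb2 <;> omega
  · rintro (⟨h1, h2, h3⟩ | ⟨h1, h2, h3⟩)
    · refine ⟨_, _, _, _, rfl, rfl, ?_, ?_⟩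
      · rw [strictBtw_shift_iff z hp hq hr]; split_ifs <;> omega
      · rw [strictBtw_shift_iff z hq hp hs]; split_ifs <;> omega
    · refine ⟨z + (p : ZMod (n+5)), z + (q : ZMod (n+5)),
        z + (s : ZMod (n+5)), z + (r : ZMod (n+5)), rfl,
        pair_eq_pair_iff.mpr (Or.inr ⟨rfl, rfl⟩), ?_, ?_⟩
      · rw [strictBtw_shift_iff z hp hq hs]; split_ifs <;> omega
      · rw [strictBtw_shift_iff z hq hp hr]; split_ifs <;> omega
lemma shift_cast_inj (z : ZMod (n+5)) {p q : ℕ} (hp : p < n+5) (hq : q < n+5) :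
    z + (p : ZMod (n+5)) = z + (q : ZMod (n+5)) ↔ p = q := by
  rw [add_right_inj, cast_inj_lt hp hq]

lemma shift_add_one (z : ZMod (n+5)) (u : ℕ) :
    z + (u : ZMod (n+5)) + 1 = z + ((u+1 : ℕ) : ZMod (n+5)) := by push_cast; ring

lemma cast_n5 : ((n+5 : ℕ) : ZMod (n+5)) = 0 := ZMod.natCast_self _

lemma isChord_shift_iff (z : ZMod (n+5)) {p q : ℕ} (hpq : p < q) (hq : q < n+5) :
    IsChord ({z + (p : ZMod (n+5)), z + (q : ZMod (n+5))}) ↔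
      (p + 2 ≤ q ∧ q + 2 ≤ n + 5 + p) := by
  have hp : p < n+5 := by omega
  constructor
  · rintro ⟨A, B, h, hab, h1, h2⟩
    have key : z + (q : ZMod (n+5)) ≠ z + (p : ZMod (n+5)) + 1 ∧
        z + (p : ZMod (n+5)) ≠ z + (q : ZMod (n+5)) + 1 := by
      rcases pair_eq_pair_iff.mp h with ⟨e1, e2⟩ | ⟨e1, e2⟩
      · exact ⟨e1 ▸ e2 ▸ h1, e1 ▸ e2 ▸ h2⟩
      · exact ⟨e2 ▸ e1 ▸ h2, e2 ▸ e1 ▸ h1⟩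
    obtain ⟨k1, k2⟩ := key
    rw [shift_add_one] at k1 k2
    constructor
    · have hp1 : p + 1 < n + 5 := by omega
      have : q ≠ p + 1 := fun e => k1 ((shift_cast_inj z hq hp1).mpr e)
      omega
    · by_contra hcon
      have hq4 : q = n + 4 ∧ p = 0 := by omega
      apply k2
      rw [hq4.1, hq4.2]
      have c1 : ((n+4+1 : ℕ) : ZMod (n+5)) = 0 := ZMod.natCast_self _
      show z + ((0:ℕ) : ZMod (n+5)) = z + ((n+4+1 : ℕ) : ZMod (n+5))
      rw [c1]; simp
  · rintro ⟨h1, h2⟩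
    refine ⟨z + (p : ZMod (n+5)), z + (q : ZMod (n+5)), rfl, ?_, ?_, ?_⟩
    · intro e; rw [shift_cast_inj z hp hq] at e; omega
    · rw [shift_add_one]
      intro e; rw [shift_cast_inj z hq (by omega)] at e; omega
    · rw [shift_add_one]
      rcases Nat.lt_or_ge (q+1) (n+5) with hc | hc
      · intro e; rw [shift_cast_inj z hp hc] at e; omega
      · have hqe : q = n + 4 := by omega
        have : ((q+1 : ℕ) : ZMod (n+5)) = ((0:ℕ) : ZMod (n+5)) := by
          rw [hqe, show n+4+1 = n+5 from rfl, cast_n5]; simp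
        rw [this]
        intro e; rw [shift_cast_inj z hp (by omega)] at e; omega

lemma isPolyEdge_shift_iff (z : ZMod (n+5)) {p q : ℕ} (hpq : p < q) (hq : q < n+5) :
    IsPolyEdge ({z + (p : ZMod (n+5)), z + (q : ZMod (n+5))}) ↔
      (q = p + 1 ∨ (p = 0 ∧ q = n + 4)) := by
  have hp : p < n+5 := by omega
  constructor
  · rintro ⟨A, h⟩
    rcases pair_eq_pair_iff.mp h with ⟨e1, e2⟩ | ⟨e1, e2⟩
    · left
      have : z + (q : ZMod (n+5)) = z + ((p+1:ℕ) : ZMod (n+5)) := by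
        rw [← shift_add_one, e2, e1]
      rw [shift_cast_inj z hq (by omega)] at this
      omega
    · right
      have e3 : z + (p : ZMod (n+5)) = z + ((q+1:ℕ) : ZMod (n+5)) := by
        rw [← shift_add_one, e1, e2]
      rcases Nat.lt_or_ge (q+1) (n+5) with hc | hc
      · rw [shift_cast_inj z hp hc] at e3; omega
      · have hqe : q = n + 4 := by omega
        have : ((q+1 : ℕ) : ZMod (n+5)) = ((0:ℕ) : ZMod (n+5)) := by
          rw [hqe, show n+4+1 = n+5 from rfl, cast_n5]; simp
        rw [this, shift_cast_inj z hp (by omega)] at e3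
        omega
  · rintro (rfl | ⟨rfl, rfl⟩)
    · exact ⟨z + (p : ZMod (n+5)), by rw [shift_add_one]⟩
    · refine ⟨z + ((n+4:ℕ) : ZMod (n+5)), ?_⟩
      have c1 : ((n+4+1 : ℕ) : ZMod (n+5)) = 0 := ZMod.natCast_self _
      rw [shift_add_one, c1]
      exact pair_eq_pair_iff.mpr (Or.inr ⟨by simp, by simp⟩)

/-! ### The snake construction -/

def tc (b : ℕ → Bool) (k : ℕ) : ℕ := ((Finset.range k).filter (fun j => b j = true)).card

lemma tc_zero (b : ℕ → Bool) : tc b 0 = 0 := by simp [tc]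

lemma tc_succ (b : ℕ → Bool) (k : ℕ) :
    tc b (k+1) = tc b k + (if b k then 1 else 0) := by
  unfold tc
  rw [Finset.range_add_one, Finset.filter_insert]
  split_ifs with h
  · rw [Finset.card_insert_of_notMem (by simp)]
  · simp

lemma tc_le (b : ℕ → Bool) (k : ℕ) : tc b k ≤ k := by
  calc ((Finset.range k).filter (fun j => b j = true)).card
      ≤ (Finset.range k).card := Finset.card_filter_le _ _
    _ = k := Finset.card_range k

lemma tc_mono (b : ℕ → Bool) {i j : ℕ} (h : i ≤ j) :
    tc b i ≤ tc b j ∧ tc b j ≤ tc b i + (j - i) := by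
  induction j, h using Nat.le_induction with
  | base => omega
  | succ k hk ih =>
    rw [tc_succ]
    split_ifs <;> omega

def sx (a : ZMod (n+5)) (b : ℕ → Bool) (k : ℕ) : ZMod (n+5) :=
  a - 1 - ((tc b k : ℕ) : ZMod (n+5))

def sy (a : ZMod (n+5)) (b : ℕ → Bool) (k : ℕ) : ZMod (n+5) :=
  a + 1 + ((k - tc b k : ℕ) : ZMod (n+5))

def snake (a : ZMod (n+5)) (b : ℕ → Bool) (k : ℕ) : Finset (ZMod (n+5)) :=
  {sx a b k, sy a b k}

lemma sx_shift (a : ZMod (n+5)) (b : ℕ → Bool) {i j : ℕ} (h : i ≤ j) :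
    sx a b i = sx a b j + ((tc b j - tc b i : ℕ) : ZMod (n+5)) := by
  unfold sx
  rw [Nat.cast_sub (tc_mono b h).1]
  ring

lemma sy_shift (a : ZMod (n+5)) (b : ℕ → Bool) {i j : ℕ} (h : i ≤ j) :
    sy a b i = sx a b j + ((tc b j - tc b i + (i+2) : ℕ) : ZMod (n+5)) := by
  unfold sx sy
  rw [Nat.cast_sub (tc_le b i), Nat.cast_add, Nat.cast_sub (tc_mono b h).1]
  push_cast
  ring

lemma sy_shift_self (a : ZMod (n+5)) (b : ℕ → Bool) (j : ℕ) :
    sy a b j = sx a b j + ((j + 2 : ℕ) : ZMod (n+5)) := by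
  have := sy_shift a b (le_refl j)
  simpa using this

lemma sx_shift_self (a : ZMod (n+5)) (b : ℕ → Bool) (j : ℕ) :
    sx a b j = sx a b j + ((0 : ℕ) : ZMod (n+5)) := by simp

lemma snake_rep (a : ZMod (n+5)) (b : ℕ → Bool) {i j : ℕ} (h : i ≤ j) :
    snake a b i = {sx a b j + ((tc b j - tc b i : ℕ) : ZMod (n+5)),
      sx a b j + ((tc b j - tc b i + (i+2) : ℕ) : ZMod (n+5))} := by
  rw [snake, sx_shift a b h, sy_shift a b h]

lemma snake_rep_self (a : ZMod (n+5)) (b : ℕ → Bool) (j : ℕ) :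
    snake a b j = {sx a b j + ((0 : ℕ) : ZMod (n+5)),
      sx a b j + ((j + 2 : ℕ) : ZMod (n+5))} := by
  rw [snake, sy_shift_self a b, ← sx_shift_self]

lemma snake_isChord (a : ZMod (n+5)) (b : ℕ → Bool) {k : ℕ} (hk : k ≤ n+1) :
    IsChord (snake a b k) := by
  rw [snake_rep_self]
  rw [isChord_shift_iff _ (by omega) (by omega)]
  omega

lemma snake_ne (a : ZMod (n+5)) (b : ℕ → Bool) {i j : ℕ} (hij : i < j) (hj : j ≤ n+1) :
    snake a b i ≠ snake a b j := by
  intro h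
  rw [snake_rep a b (le_of_lt hij), snake_rep_self a b j] at h
  have hs : tc b j - tc b i ≤ j - i := by have := tc_mono b (le_of_lt hij); omega
  rcases pair_eq_pair_iff.mp h with ⟨e1, e2⟩ | ⟨e1, e2⟩
  · rw [shift_cast_inj _ (by omega) (by omega)] at e1
    rw [shift_cast_inj _ (by omega) (by omega)] at e2
    omega
  · rw [shift_cast_inj _ (by omega) (by omega)] at e1
    omega

lemma snake_noncross (a : ZMod (n+5)) (b : ℕ → Bool) {i j : ℕ} (hij : i ≠ j)
    (hi : i ≤ n+1) (hj : j ≤ n+1) :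
    ¬ ChordsCross (snake a b i) (snake a b j) := by
  rcases Nat.lt_or_ge i j with h | h
  · rw [snake_rep a b (le_of_lt h), snake_rep_self a b j]
    have hs : tc b j - tc b i ≤ j - i := by have := tc_mono b (le_of_lt h); omega
    rw [chordsCross_shift_iff _ (by omega) (by omega) (by omega) (by omega)]
    omega
  · have h' : j < i := by omega
    rw [snake_rep a b (le_of_lt h'), snake_rep_self a b i]
    have hs : tc b i - tc b j ≤ i - j := by have := tc_mono b (le_of_lt h'); omega
    rw [chordsCross_shift_iff _ (by omega) (by omega) (by omega) (by omega)]
    omega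

lemma sx_ne_sy (a : ZMod (n+5)) (b : ℕ → Bool) {k : ℕ} (hk : k ≤ n+1) :
    sx a b k ≠ sy a b k := by
  rw [sy_shift_self]
  intro h
  have h' : sx a b k + ((0:ℕ) : ZMod (n+5)) = sx a b k + ((k+2 : ℕ) : ZMod (n+5)) := by
    simpa using h
  rw [shift_cast_inj _ (by omega) (by omega)] at h'
  omega

lemma mem_snake_iff (a : ZMod (n+5)) (b : ℕ → Bool) {k : ℕ} {v : ZMod (n+5)} :
    v ∈ snake a b k ↔ v = sx a b k ∨ v = sy a b k := by
  simp [snake]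

lemma shared_structure (a : ZMod (n+5)) (b : ℕ → Bool) {i j : ℕ} (hij : i < j)
    (hj : j ≤ n+1) {v : ZMod (n+5)}
    (h1 : v ∈ snake a b i) (h2 : v ∈ snake a b j) :
    (tc b i = tc b j ∧ v = sx a b i ∧ v = sx a b j) ∨
    (i - tc b i = j - tc b j ∧ v = sy a b i ∧ v = sy a b j) := by
  have hmono := tc_mono b (le_of_lt hij)
  have hs : tc b j - tc b i ≤ j - i := by omega
  have hle1 := tc_le b i
  have hle2 := tc_le b j
  have Ex := sx_shift a b (le_of_lt hij)
  have Ey := sy_shift a b (le_of_lt hij)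
  have Ej := sy_shift_self a b j
  rw [mem_snake_iff] at h1 h2
  rcases h1 with h1 | h1 <;> rcases h2 with h2 | h2
  · exact Or.inl ⟨by
      have h' : sx a b j + ((tc b j - tc b i : ℕ) : ZMod (n+5)) =
          sx a b j + ((0:ℕ) : ZMod (n+5)) := by
        rw [← Ex, ← h1, h2]; simp
      rw [shift_cast_inj _ (by omega) (by omega)] at h'
      omega, h1, h2⟩
  · exfalso
    have h' : sx a b j + ((tc b j - tc b i : ℕ) : ZMod (n+5)) =
        sx a b j + ((j+2 : ℕ) : ZMod (n+5)) := by
      rw [← Ex, ← Ej, ← h1, h2]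
    rw [shift_cast_inj _ (by omega) (by omega)] at h'
    omega
  · exfalso
    have h' : sx a b j + ((tc b j - tc b i + (i+2) : ℕ) : ZMod (n+5)) =
        sx a b j + ((0:ℕ) : ZMod (n+5)) := by
      rw [← Ey, ← h1, h2]; simp
    rw [shift_cast_inj _ (by omega) (by omega)] at h'
    omega
  · exact Or.inr ⟨by
      have h' : sx a b j + ((tc b j - tc b i + (i+2) : ℕ) : ZMod (n+5)) =
          sx a b j + ((j+2 : ℕ) : ZMod (n+5)) := by
        rw [← Ey, ← Ej, ← h1, h2]
      rw [shift_cast_inj _ (by omega) (by omega)] at h'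
      omega, h1, h2⟩

lemma shared_structure' (a : ZMod (n+5)) (b : ℕ → Bool) {i j : ℕ} (hij : i ≠ j)
    (hi : i ≤ n+1) (hj : j ≤ n+1) {v : ZMod (n+5)}
    (h1 : v ∈ snake a b i) (h2 : v ∈ snake a b j) :
    (tc b i = tc b j ∧ v = sx a b i ∧ v = sx a b j) ∨
    (i - tc b i = j - tc b j ∧ v = sy a b i ∧ v = sy a b j) := by
  rcases Nat.lt_or_ge i j with h | h
  · exact shared_structure a b h hj h1 h2
  · have h' : j < i := by omega
    rcases shared_structure a b h' hi h2 h1 with ⟨e1, e2, e3⟩ | ⟨e1, e2, e3⟩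
    · exact Or.inl ⟨e1.symm, e3, e2⟩
    · exact Or.inr ⟨e1.symm, e3, e2⟩

lemma chord_pair_ne {s : Finset (ZMod (n+5))} (h : IsChord s) {u v : ZMod (n+5)}
    (he : s = {u, v}) : u ≠ v := by
  obtain ⟨A, B, hs, hab, -, -⟩ := h
  rintro rfl
  rcases pair_eq_pair_iff.mp (hs.symm.trans he) with ⟨e1, e2⟩ | ⟨e1, e2⟩ <;>
    exact hab (e1.trans e2.symm)

lemma not_polyedge_singleton {A : ZMod (n+5)} : ¬ IsPolyEdge ({A} : Finset (ZMod (n+5))) := by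
  rintro ⟨w, h⟩
  have h' : ({w, w+1} : Finset (ZMod (n+5))) = {A, A} := by
    rw [← h]; simp
  rcases pair_eq_pair_iff.mp h' with ⟨e1, e2⟩ | ⟨e1, e2⟩ <;>
  · rw [← e1] at e2
    have e3 : ((1:ℕ) : ZMod (n+5)) = ((0:ℕ) : ZMod (n+5)) := by
      simpa using add_eq_left.mp e2
    rw [cast_inj_lt (by omega) (by omega)] at e3
    omega

lemma snake_no_triangle (a : ZMod (n+5)) (b : ℕ → Bool) {i1 i2 i3 : ℕ}
    (h1 : i1 ≤ n+1) (h2 : i2 ≤ n+1) (h3 : i3 ≤ n+1) {A B C : ZMod (n+5)}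
    (e1 : snake a b i1 = {A, B}) (e2 : snake a b i2 = {B, C})
    (e3 : snake a b i3 = {A, C}) : False := by
  have hAB : A ≠ B := chord_pair_ne (snake_isChord a b h1) e1
  have hBC : B ≠ C := chord_pair_ne (snake_isChord a b h2) e2
  have hAC : A ≠ C := chord_pair_ne (snake_isChord a b h3) e3
  have d12 : i1 ≠ i2 := by
    rintro rfl
    rcases pair_eq_pair_iff.mp (e1.symm.trans e2) with ⟨f1, f2⟩ | ⟨f1, f2⟩
    · exact hAB f1
    · exact hAC f1
  have d13 : i1 ≠ i3 := by
    rintro rfl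
    rcases pair_eq_pair_iff.mp (e1.symm.trans e3) with ⟨f1, f2⟩ | ⟨f1, f2⟩
    · exact hBC f2
    · exact hAC f1
  have d23 : i2 ≠ i3 := by
    rintro rfl
    rcases pair_eq_pair_iff.mp (e2.symm.trans e3) with ⟨f1, f2⟩ | ⟨f1, f2⟩
    · exact hAB f1.symm
    · exact hBC f1
  have mB1 : B ∈ snake a b i1 := by rw [e1]; simp
  have mB2 : B ∈ snake a b i2 := by rw [e2]; simp
  have mA1 : A ∈ snake a b i1 := by rw [e1]; simp
  have mA3 : A ∈ snake a b i3 := by rw [e3]; simp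
  have mC2 : C ∈ snake a b i2 := by rw [e2]; simp
  have mC3 : C ∈ snake a b i3 := by rw [e3]; simp
  have L1 := tc_le b i1
  have L2 := tc_le b i2
  have L3 := tc_le b i3
  rcases shared_structure' a b d12 h1 h2 mB1 mB2 with ⟨t12, v12, -⟩ | ⟨t12, v12, -⟩ <;>
    rcases shared_structure' a b d13 h1 h3 mA1 mA3 with ⟨t13, v13, -⟩ | ⟨t13, v13, -⟩ <;>
    rcases shared_structure' a b d23 h2 h3 mC2 mC3 with ⟨t23, -, -⟩ | ⟨t23, -, -⟩ <;>
    first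
      | exact hAB (v13.trans v12.symm)
      | omega

lemma label_core (a : ZMod (n+5)) (b : ℕ → Bool) {i j : ℕ} (hij : i < j) (hj : j ≤ n+1)
    {A B C : ZMod (n+5)}
    (e1 : snake a b i = {A, B}) (e2 : snake a b j = {B, C})
    (hp : IsPolyEdge ({A, C} : Finset (ZMod (n+5)))) : j = i + 1 := by
  have hi : i ≤ n+1 := by omega
  have hAB : A ≠ B := chord_pair_ne (snake_isChord a b hi) e1
  have hBC : B ≠ C := chord_pair_ne (snake_isChord a b hj) e2
  have hxyi := sx_ne_sy a b hi
  have hxyj := sx_ne_sy a b hj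
  have mB1 : B ∈ snake a b i := by rw [e1]; simp
  have mB2 : B ∈ snake a b j := by rw [e2]; simp
  have hmono := tc_mono b (le_of_lt hij)
  have L1 := tc_le b i
  have L2 := tc_le b j
  have Ey := sy_shift a b (le_of_lt hij)
  have Ej := sy_shift_self a b j
  have Exs := sx_shift a b (le_of_lt hij)
  have es1 : ({sx a b i, sy a b i} : Finset (ZMod (n+5))) = {A, B} := e1
  have es2 : ({sx a b j, sy a b j} : Finset (ZMod (n+5))) = {B, C} := e2
  rcases shared_structure a b hij hj mB1 mB2 with ⟨t, vB1, vB2⟩ | ⟨t, vB1, vB2⟩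
  · -- x-type : B = sx i = sx j
    have hA : A = sy a b i := by
      rcases pair_eq_pair_iff.mp es1 with ⟨f1, f2⟩ | ⟨f1, f2⟩
      · exact absurd (vB1.symm.trans f2.symm) hxyi
      · exact f2.symm
    have hC : C = sy a b j := by
      rcases pair_eq_pair_iff.mp es2 with ⟨f1, f2⟩ | ⟨f1, f2⟩
      · exact f2.symm
      · exact absurd (vB2.symm.trans f2.symm) hxyj
    have eA : A = sx a b j + ((i+2 : ℕ) : ZMod (n+5)) := by
      rw [hA, Ey, show tc b j - tc b i + (i+2) = i+2 by omega]
    have eC : C = sx a b j + ((j+2 : ℕ) : ZMod (n+5)) := by rw [hC, Ej]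
    rw [eA, eC, isPolyEdge_shift_iff _ (by omega) (by omega)] at hp
    omega
  · -- y-type : B = sy i = sy j
    have hA : A = sx a b i := by
      rcases pair_eq_pair_iff.mp es1 with ⟨f1, f2⟩ | ⟨f1, f2⟩
      · exact f1.symm
      · exact absurd (f1.trans vB1) hxyi
    have hC : C = sx a b j := by
      rcases pair_eq_pair_iff.mp es2 with ⟨f1, f2⟩ | ⟨f1, f2⟩
      · exact absurd (f1.trans vB2) hxyj
      · exact f1.symm
    have hsval : tc b j - tc b i = j - i := by omega
    have eA : A = sx a b j + ((j - i : ℕ) : ZMod (n+5)) := by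
      rw [hA, Exs, hsval]
    have eC : C = sx a b j + ((0 : ℕ) : ZMod (n+5)) := by rw [hC]; simp
    rw [eA, eC, Finset.pair_comm, isPolyEdge_shift_iff _ (by omega) (by omega)] at hp
    omega

lemma snake_label (a : ZMod (n+5)) (b : ℕ → Bool) {i j : ℕ} (hi : i ≤ n+1) (hj : j ≤ n+1)
    {A B C : ZMod (n+5)}
    (e1 : snake a b i = {A, B}) (e2 : snake a b j = {B, C})
    (hp : IsPolyEdge ({A, C} : Finset (ZMod (n+5)))) : i + 1 = j ∨ j + 1 = i := by
  have hAB : A ≠ B := chord_pair_ne (snake_isChord a b hi) e1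
  have hBC : B ≠ C := chord_pair_ne (snake_isChord a b hj) e2
  have hij : i ≠ j := by
    rintro rfl
    rcases pair_eq_pair_iff.mp (e1.symm.trans e2) with ⟨f1, f2⟩ | ⟨f1, f2⟩
    · exact hAB f1
    · subst f1
      rw [show ({A, A} : Finset (ZMod (n+5))) = {A} by simp] at hp
      exact not_polyedge_singleton hp
  rcases Nat.lt_or_ge i j with h | h
  · exact Or.inl (label_core a b h hj e1 e2 hp).symm
  · have h' : j < i := by omega
    refine Or.inr (label_core a b (A := C) (B := B) (C := A) h' hi ?_ ?_ ?_).symm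
    · rw [e2, Finset.pair_comm]
    · rw [e1, Finset.pair_comm]
    · rw [Finset.pair_comm] at hp; exact hp

/-! ### Part 1 assembly -/

def extb (b : Fin (n+1) → Bool) : ℕ → Bool := fun j => if h : j < n+1 then b ⟨j, h⟩ else false

def F (a : ZMod (n+5)) (b : Fin (n+1) → Bool) : Fin (n+2) → Finset (ZMod (n+5)) :=
  fun i => snake a (extb b) i.val

lemma snake_zero (a : ZMod (n+5)) (b : ℕ → Bool) : snake a b 0 = {a - 1, a + 1} := by
  simp [snake, sx, sy, tc_zero]

theorem F_isCTFT (a : ZMod (n+5)) (b : Fin (n+1) → Bool) : IsCTFT (F a b) := by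
  have hb : ∀ i : Fin (n+2), (i : ℕ) ≤ n+1 := fun i => by omega
  refine ⟨fun i => snake_isChord a _ (hb i), ?_, ?_, ?_, ?_, ?_⟩
  · intro i j hEq
    by_contra hne
    rcases Nat.lt_trichotomy (i : ℕ) (j : ℕ) with h | h | h
    · exact snake_ne a _ h (hb j) hEq
    · exact hne (Fin.ext h)
    · exact snake_ne a _ h (hb i) hEq.symm
  · intro i j hne
    have : (i : ℕ) ≠ (j : ℕ) := fun h => hne (Fin.ext h)
    exact snake_noncross a _ this (hb i) (hb j)
  · rintro ⟨A, B, C, ⟨i1, e1⟩, ⟨i2, e2⟩, ⟨i3, e3⟩⟩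
    exact snake_no_triangle a _ (hb i1) (hb i2) (hb i3) e1 e2 e3
  · exact ⟨a, by rw [show F a b 0 = snake a (extb b) 0 from rfl, snake_zero]⟩
  · intro A B C i j e1 e2 hp
    exact snake_label a _ (hb i) (hb j) e1 e2 hp

lemma dvd_range_eq {s : ℕ} (h : (n+5) ∣ s) (h1 : 2 ≤ s) (h2 : s ≤ 2*n+6) : s = n+5 := by
  obtain ⟨c, hc⟩ := h
  rcases c with _ | _ | c
  · omega
  · omega
  · have h3 : (n+5)*2 ≤ (n+5)*(c+1+1) := Nat.mul_le_mul_left _ (by omega)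
    omega

theorem F_inj (a a' : ZMod (n+5)) (b b' : Fin (n+1) → Bool) (h : F a b = F a' b') :
    a = a' ∧ b = b' := by
  have haa : a = a' := by
    have h0 : ({a - 1, a + 1} : Finset (ZMod (n+5))) = {a' - 1, a' + 1} := by
      have := congrFun h 0
      rwa [show F a b 0 = snake a (extb b) 0 from rfl,
        show F a' b' 0 = snake a' (extb b') 0 from rfl, snake_zero, snake_zero] at this
    rcases pair_eq_pair_iff.mp h0 with ⟨f1, f2⟩ | ⟨f1, f2⟩
    · have := congrArg (· + 1) f1
      simpa using this
    · exfalso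
      have h4 : ((4:ℕ) : ZMod (n+5)) = ((0:ℕ) : ZMod (n+5)) := by
        push_cast
        linear_combination f2 - f1
      rw [cast_inj_lt (by omega) (by omega)] at h4
      omega
  subst haa
  have htc : ∀ k ≤ n+1, tc (extb b) k = tc (extb b') k := by
    intro k hk
    have hEq : snake a (extb b) k = snake a (extb b') k := by
      have := congrFun h ⟨k, by omega⟩
      rwa [show F a b ⟨k, by omega⟩ = snake a (extb b) k from rfl,
        show F a b' ⟨k, by omega⟩ = snake a (extb b') k from rfl] at this
    set u := tc (extb b) k with hu
    set u' := tc (extb b') k with hu'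
    have hul : u ≤ k := tc_le _ k
    have hul' : u' ≤ k := tc_le _ k
    set v := k - u with hv
    set v' := k - u' with hv'
    have hEq' : ({a - 1 - ((u:ℕ) : ZMod (n+5)), a + 1 + ((v:ℕ) : ZMod (n+5))} : Finset (ZMod (n+5)))
        = {a - 1 - ((u':ℕ) : ZMod (n+5)), a + 1 + ((v':ℕ) : ZMod (n+5))} := hEq
    rcases pair_eq_pair_iff.mp hEq' with ⟨f1, f2⟩ | ⟨f1, f2⟩
    · have : ((u:ℕ) : ZMod (n+5)) = ((u':ℕ) : ZMod (n+5)) := by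
        linear_combination -f1
      rw [cast_inj_lt (by omega) (by omega)] at this
      omega
    · exfalso
      have g1 : ((u + v' + 2 : ℕ) : ZMod (n+5)) = 0 := by
        push_cast
        linear_combination -f1
      have g2 : ((v + u' + 2 : ℕ) : ZMod (n+5)) = 0 := by
        push_cast
        linear_combination f2
      rw [ZMod.natCast_eq_zero_iff] at g1 g2
      have e1 := dvd_range_eq g1 (by omega) (by omega)
      have e2 := dvd_range_eq g2 (by omega) (by omega)
      omega
  refine ⟨rfl, funext fun j => ?_⟩
  have t1 := htc j.val (by omega)
  have t2 := htc (j.val + 1) (by omega)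
  rw [tc_succ, tc_succ] at t2
  have hb1 : extb b j.val = b j := by simp [extb, j.isLt]
  have hb2 : extb b' j.val = b' j := by simp [extb, j.isLt]
  rw [hb1, hb2] at t2
  rcases hbj : b j <;> rcases hbj' : b' j <;> rw [hbj, hbj'] at t2 <;> simp at t2 <;> omega

/-! ### Nat-indexed non-crossing chord combinatorics -/

def NoCross (x y : ℕ × ℕ) : Prop :=
  ¬ (x.1 < y.1 ∧ y.1 < x.2 ∧ x.2 < y.2) ∧ ¬ (y.1 < x.1 ∧ x.1 < y.2 ∧ y.2 < x.2)

def Bnd (L : ℕ) (T : Finset (ℕ × ℕ)) : Prop := ∀ x ∈ T, x.1 + 2 ≤ x.2 ∧ x.2 < L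

def NC (T : Finset (ℕ × ℕ)) : Prop := ∀ x ∈ T, ∀ y ∈ T, x ≠ y → NoCross x y

lemma shift_facts {L : ℕ} {T : Finset (ℕ × ℕ)} (p0 : ℕ) (hb : Bnd L T) (hnc : NC T)
    (hall : ∀ x ∈ T, p0 ≤ x.1) :
    (T.image (fun x => (x.1 - p0, x.2 - p0))).card = T.card ∧
    Bnd (L - p0) (T.image (fun x => (x.1 - p0, x.2 - p0))) ∧
    NC (T.image (fun x => (x.1 - p0, x.2 - p0))) := by
  have hinj : Set.InjOn (fun x : ℕ × ℕ => (x.1 - p0, x.2 - p0)) T := by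
    intro x hx y hy hxy
    have h1 := hall x hx
    have h2 := hall y hy
    have h3 := hb x hx
    have h4 := hb y hy
    have e1 : x.1 - p0 = y.1 - p0 := congrArg Prod.fst hxy
    have e2 : x.2 - p0 = y.2 - p0 := congrArg Prod.snd hxy
    have : x.1 = y.1 := by omega
    have : x.2 = y.2 := by omega
    exact Prod.ext ‹x.1 = y.1› ‹x.2 = y.2›
  refine ⟨Finset.card_image_of_injOn hinj, ?_, ?_⟩
  · intro y hy
    obtain ⟨x, hx, rfl⟩ := Finset.mem_image.mp hy
    have h1 := hall x hx
    have h3 := hb x hx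
    constructor <;> simp <;> omega
  · intro y1 hy1 y2 hy2 hne
    obtain ⟨x1, hx1, rfl⟩ := Finset.mem_image.mp hy1
    obtain ⟨x2, hx2, rfl⟩ := Finset.mem_image.mp hy2
    have hxne : x1 ≠ x2 := fun h => hne (by rw [h])
    have := hnc x1 hx1 x2 hx2 hxne
    have h1 := hall x1 hx1
    have h2 := hall x2 hx2
    have h3 := hb x1 hx1
    have h4 := hb x2 hx2
    unfold NoCross at this ⊢
    simp only at *
    omega

lemma csplit (L : ℕ) (IH : ∀ L' < L, ∀ T' : Finset (ℕ × ℕ), Bnd L' T' → NC T' → T'.card ≤ L' - 2)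
    (T : Finset (ℕ × ℕ)) (hb : Bnd L T) (hnc : NC T)
    (hcl : ∀ x ∈ T, ¬ (x.1 = 0 ∧ x.2 + 1 = L)) : T.card ≤ L - 3 := by
  rcases T.eq_empty_or_nonempty with rfl | ⟨x0, hx0⟩
  · simp
  have hL3 : 3 ≤ L := by have := hb x0 hx0; omega
  by_cases hS : ∃ x ∈ T, x.2 + 1 = L
  · obtain ⟨m, hm, hmin⟩ := Finset.exists_min_image (T.filter (fun x => x.2 + 1 = L))
      Prod.fst (by obtain ⟨x, hx, he⟩ := hS; exact ⟨x, Finset.mem_filter.mpr ⟨hx, he⟩⟩)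
    obtain ⟨hmT, hmL⟩ := Finset.mem_filter.mp hm
    set p0 := m.1 with hp0
    have hp0pos : 1 ≤ p0 := by
      rcases Nat.eq_zero_or_pos p0 with h0 | h; · exact absurd ⟨h0, hmL⟩ (hcl m hmT)
      · exact h
    have hp0le : p0 + 2 ≤ L - 1 := by have := hb m hmT; omega
    set A := T.filter (fun x => x.2 ≤ p0) with hA
    set B := T.filter (fun x => p0 ≤ x.1) with hB
    have hcover : ∀ x ∈ T, x.2 ≤ p0 ∨ p0 ≤ x.1 := by
      intro x hx
      by_cases hxe : x.2 + 1 = L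
      · exact Or.inr (hmin x (Finset.mem_filter.mpr ⟨hx, hxe⟩))
      · have hxm : x ≠ m := by intro h; rw [h] at hxe; exact hxe hmL
        have hncx := (hnc x hx m hmT hxm).1
        have hbx := hb x hx
        have hbm := hb m hmT
        omega
    have hdisj : Disjoint A B := by
      rw [Finset.disjoint_left]
      intro x hxA hxB
      have h1 := (Finset.mem_filter.mp hxA).2
      have h2 := (Finset.mem_filter.mp hxB).2
      have h3 := hb x (Finset.mem_filter.mp hxA).1
      omega
    have hunion : T = A ∪ B := by
      ext x
      simp only [hA, hB, Finset.mem_union, Finset.mem_filter]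
      constructor
      · intro hx; rcases hcover x hx with h | h
        · exact Or.inl ⟨hx, h⟩
        · exact Or.inr ⟨hx, h⟩
      · rintro (⟨hx, -⟩ | ⟨hx, -⟩) <;> exact hx
    have hcardA : A.card ≤ p0 - 1 := by
      have := IH (p0 + 1) (by omega) A
        (fun x hx => by
          have h1 := hb x (Finset.mem_filter.mp hx).1
          have h2 := (Finset.mem_filter.mp hx).2
          exact ⟨h1.1, by omega⟩)
        (fun x hx y hy hxy => hnc x (Finset.mem_filter.mp hx).1 y (Finset.mem_filter.mp hy).1 hxy)
      omega
    have hBall : ∀ x ∈ B, p0 ≤ x.1 := fun x hx => (Finset.mem_filter.mp hx).2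
    have hBb : Bnd L B := fun x hx => hb x (Finset.mem_filter.mp hx).1
    have hBnc : NC B := fun x hx y hy hxy =>
      hnc x (Finset.mem_filter.mp hx).1 y (Finset.mem_filter.mp hy).1 hxy
    obtain ⟨hc1, hc2, hc3⟩ := shift_facts p0 hBb hBnc hBall
    have hcardB : B.card ≤ L - p0 - 2 := by
      have := IH (L - p0) (by omega) _ hc2 hc3
      omega
    have := Finset.card_union_of_disjoint hdisj
    rw [← hunion] at this
    omega
  · push_neg at hS
    have := IH (L - 1) (by omega) T (fun x hx => ⟨(hb x hx).1, by have := hb x hx; have := hS x hx; omega⟩) hnc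
    omega

lemma lemC : ∀ L : ℕ, ∀ T : Finset (ℕ × ℕ), Bnd L T → NC T → T.card ≤ L - 2 := by
  intro L
  induction L using Nat.strong_induction_on with
  | _ L IH =>
    intro T hb hnc
    by_cases hcl : (0, L - 1) ∈ T
    · have hL3 : 3 ≤ L := by have := hb _ hcl; simp at this; omega
      set T' := T.erase (0, L - 1) with hT'
      have hsub : T' ⊆ T := Finset.erase_subset _ _
      have h1 : T'.card ≤ L - 3 := by
        apply csplit L IH T' (fun x hx => hb x (hsub hx))
          (fun x hx y hy hxy => hnc x (hsub hx) y (hsub hy) hxy)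
        intro x hx ⟨e1, e2⟩
        have : x = (0, L-1) := Prod.ext e1 (by omega)
        exact (Finset.ne_of_mem_erase hx) this
      have hce := Finset.card_erase_of_mem hcl
      rw [← hT'] at hce
      have hTpos : 0 < T.card := Finset.card_pos.mpr ⟨_, hcl⟩
      omega
    · have : T.card ≤ L - 3 := by
        apply csplit L IH T hb hnc
        intro x hx ⟨e1, e2⟩
        apply hcl
        have : x = (0, L-1) := Prod.ext e1 (by omega)
        rwa [this] at hx
      omega

lemma lemC' (L : ℕ) (T : Finset (ℕ × ℕ)) (hb : Bnd L T) (hnc : NC T)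
    (hcl : (0, L - 1) ∉ T) : T.card ≤ L - 3 := by
  apply csplit L (fun L' _ T' hb' hnc' => lemC L' T' hb' hnc') T hb hnc
  intro x hx ⟨e1, e2⟩
  apply hcl
  have : x = (0, L-1) := Prod.ext e1 (by omega)
  rwa [this] at hx

lemma lemB (L : ℕ) (hL : 3 ≤ L) (T : Finset (ℕ × ℕ)) (hb : Bnd L T) (hnc : NC T)
    (hcl : (0, L - 1) ∉ T) (hcard : T.card = L - 3) :
    ∃ w, 0 < w ∧ w < L - 1 ∧ ((0, w) ∈ T ∨ w = 1) ∧ ((w, L - 1) ∈ T ∨ w + 1 = L - 1) := by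
  rcases Nat.eq_or_lt_of_le hL with hL3 | hL4
  · exact ⟨1, by omega, by omega, Or.inr rfl, Or.inr (by omega)⟩
  have hL4 : 4 ≤ L := hL4
  by_cases hS0 : ∃ x ∈ T, x.1 = 0
  · obtain ⟨m, hm, hmax⟩ := Finset.exists_max_image (T.filter (fun x => x.1 = 0))
      Prod.snd (by obtain ⟨x, hx, he⟩ := hS0; exact ⟨x, Finset.mem_filter.mpr ⟨hx, he⟩⟩)
    obtain ⟨hmT, hm0⟩ := Finset.mem_filter.mp hm
    set j := m.2 with hj
    have hmeq : m = (0, j) := Prod.ext hm0 rfl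
    have hbm := hb m hmT
    have hj2 : 2 ≤ j := by omega
    have hjle : j ≤ L - 2 := by
      rcases Nat.lt_or_ge j (L-1) with h | h
      · omega
      · exfalso; apply hcl
        have : m = (0, L-1) := Prod.ext hm0 (by omega)
        rwa [this] at hmT
    rcases Nat.eq_or_lt_of_le hjle with hjE | hjlt
    · exact ⟨j, by omega, by omega, Or.inl (hmeq ▸ hmT), Or.inr (by omega)⟩
    · -- j ≤ L - 3; show (j, L-1) ∈ T
      have hjle3 : j ≤ L - 3 := by omega
      by_cases hmemJ : (j, L - 1) ∈ T
      · exact ⟨j, by omega, by omega, Or.inl (hmeq ▸ hmT), Or.inl hmemJ⟩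
      exfalso
      have hno : (j, L - 1) ∉ T := hmemJ
      set A := T.filter (fun x => x.2 ≤ j ∧ x ≠ m) with hA
      set B := T.filter (fun x => j ≤ x.1) with hB
      have hcover : ∀ x ∈ T, x ≠ m → (x.2 ≤ j ∨ j ≤ x.1) := by
        intro x hx hxm
        by_cases hx0 : x.1 = 0
        · have := hmax x (Finset.mem_filter.mpr ⟨hx, hx0⟩)
          omega
        · have hncx' := (hnc m hmT x hx (fun h => hxm h.symm)).1
          have hbx := hb x hx
          have hncx : ¬ (0 < x.1 ∧ x.1 < j ∧ j < x.2) := by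
            simpa [hmeq] using hncx'
          omega
      have hdisj : Disjoint A B := by
        rw [Finset.disjoint_left]
        intro x hxA hxB
        have h1 := (Finset.mem_filter.mp hxA).2
        have h2 := (Finset.mem_filter.mp hxB).2
        have h3 := hb x (Finset.mem_filter.mp hxA).1
        omega
      have hmA : m ∉ A := by
        intro h; exact ((Finset.mem_filter.mp h).2.2) rfl
      have hmB : m ∉ B := by
        intro h; have := (Finset.mem_filter.mp h).2; omega
      have hunion : T = insert m (A ∪ B) := by
        ext x
        simp only [hA, hB, Finset.mem_insert, Finset.mem_union, Finset.mem_filter]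
        constructor
        · intro hx
          by_cases hxm : x = m
          · exact Or.inl hxm
          · rcases hcover x hx hxm with h | h
            · exact Or.inr (Or.inl ⟨hx, h, hxm⟩)
            · exact Or.inr (Or.inr ⟨hx, h⟩)
        · rintro (rfl | (⟨hx, -⟩ | ⟨hx, -⟩)) <;> first | exact hmT | exact hx
      have hcardA : A.card ≤ j + 1 - 3 := by
        apply lemC' (j+1) A
        · intro x hx
          have h1 := hb x (Finset.mem_filter.mp hx).1
          have h2 := (Finset.mem_filter.mp hx).2
          exact ⟨h1.1, by omega⟩
        · exact fun x hx y hy hxy =>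
            hnc x (Finset.mem_filter.mp hx).1 y (Finset.mem_filter.mp hy).1 hxy
        · intro hmemA
          have := (Finset.mem_filter.mp hmemA).2
          have : (0, j+1-1) = m := Prod.ext hm0.symm (by simp [hj])
          exact (Finset.mem_filter.mp hmemA).2.2 this
      have hBall : ∀ x ∈ B, j ≤ x.1 := fun x hx => (Finset.mem_filter.mp hx).2
      have hBb : Bnd L B := fun x hx => hb x (Finset.mem_filter.mp hx).1
      have hBnc : NC B := fun x hx y hy hxy =>
        hnc x (Finset.mem_filter.mp hx).1 y (Finset.mem_filter.mp hy).1 hxy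
      obtain ⟨hc1, hc2, hc3⟩ := shift_facts j hBb hBnc hBall
      have hcardB : B.card ≤ L - j - 3 := by
        have hclB : (0, L - j - 1) ∉ B.image (fun x => (x.1 - j, x.2 - j)) := by
          intro hmem
          obtain ⟨x, hx, he⟩ := Finset.mem_image.mp hmem
          have h1 := hBall x hx
          have h2 := hBb x hx
          have e1 : x.1 - j = 0 := congrArg Prod.fst he
          have e2 : x.2 - j = L - j - 1 := congrArg Prod.snd he
          have : x = (j, L - 1) := Prod.ext (by show x.1 = j; omega) (by show x.2 = L - 1; omega)
          rw [this] at hx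
          exact hno (Finset.mem_filter.mp hx).1
        have := lemC' (L - j) _ (by simpa [Nat.sub_sub] using hc2) hc3 hclB
        omega
      have hcu : (A ∪ B).card ≤ A.card + B.card := Finset.card_union_le _ _
      have hci : T.card ≤ (A ∪ B).card + 1 := by
        rw [hunion]; exact (Finset.card_insert_le _ _)
      omega
  · -- no chord incident to 0 : then (1, L-1) ∈ T and w = 1
    push_neg at hS0
    have hall : ∀ x ∈ T, 1 ≤ x.1 := by
      intro x hx
      have := hS0 x hx
      omega
    obtain ⟨hc1, hc2, hc3⟩ := shift_facts 1 hb hnc hall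
    by_cases hmem : (1, L - 1) ∈ T
    · exact ⟨1, by omega, by omega, Or.inr rfl, Or.inl hmem⟩
    · exfalso
      have hclsh : (0, L - 1 - 1) ∉ T.image (fun x => (x.1 - 1, x.2 - 1)) := by
        intro hm
        obtain ⟨x, hx, he⟩ := Finset.mem_image.mp hm
        have h1 := hall x hx
        have h2 := hb x hx
        have e1 : x.1 - 1 = 0 := congrArg Prod.fst he
        have e2 : x.2 - 1 = L - 1 - 1 := congrArg Prod.snd he
        have : x = (1, L - 1) := Prod.ext (by show x.1 = 1; omega) (by show x.2 = L - 1; omega)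
        rw [this] at hx
        exact hmem hx
      have := lemC' (L - 1) _ hc2 hc3 hclsh
      omega

/-! ### Part 2 : every CTFT is a snake -/

lemma base_rep (u v : ZMod (n+5)) : v = u + (((v - u).val : ℕ) : ZMod (n+5)) := by
  rw [ZMod.natCast_zmod_val]; ring

lemma chord_other {s : Finset (ZMod (n+5))} (hs : IsChord s) {v : ZMod (n+5)} (hv : v ∈ s) :
    ∃ z, z ≠ v ∧ s = {v, z} := by
  obtain ⟨A, B, rfl, hab, -, -⟩ := hs
  rcases Finset.mem_insert.mp hv with rfl | hv'
  · exact ⟨B, fun h => hab h.symm, rfl⟩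
  · rw [Finset.mem_singleton] at hv'
    subst hv'
    exact ⟨A, hab, Finset.pair_comm A v⟩

lemma cast_split (u : ZMod (n+5)) {o c : ℕ} (h : c ≤ o) :
    u + (c : ZMod (n+5)) + ((o - c : ℕ) : ZMod (n+5)) = u + (o : ZMod (n+5)) := by
  rw [add_assoc, ← Nat.cast_add, show c + (o - c) = o by omega]

lemma lemA (d : Fin (n+2) → Finset (ZMod (n+5)))
    (hch : ∀ i, IsChord (d i)) (hinj : Function.Injective d)
    (hnc : ∀ i j, i ≠ j → ¬ ChordsCross (d i) (d j))
    (a : ZMod (n+5)) (b : ℕ → Bool) :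
    ∀ k, ∀ hk : k ≤ n+1, (∀ j, ∀ hj : j ≤ k, d ⟨j, by omega⟩ = snake a b j) →
    ∀ l : Fin (n+2), k < l.val → ∀ v, v ∈ d l → ∀ o, 0 < o → o < k+2 →
    v = sx a b k + (o : ZMod (n+5)) → False := by
  intro k
  induction k with
  | zero =>
    intro hk hsnake l hl v hv o ho1 ho2 hveq
    have ho : o = 1 := by omega
    subst ho
    obtain ⟨u0, hu0⟩ : ∃ x, x = sx a b 0 := ⟨_, rfl⟩
    rw [← hu0] at hveq
    obtain ⟨z, hzne, hdl⟩ := chord_other (hch l) hv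
    obtain ⟨oz, hoz⟩ : ∃ m, m = (z - u0).val := ⟨_, rfl⟩
    have hozlt : oz < n+5 := hoz ▸ ZMod.val_lt _
    have hzrep : z = u0 + (oz : ZMod (n+5)) := by rw [hoz]; exact base_rep u0 z
    have hozne : oz ≠ 1 := by
      intro h; rw [h] at hzrep; exact hzne (hzrep.trans hveq.symm)
    have hd0 : d ⟨0, by omega⟩ = {u0 + ((0:ℕ) : ZMod (n+5)), u0 + ((0+2:ℕ) : ZMod (n+5))} := by
      rw [hsnake 0 (by omega), snake_rep_self, ← hu0]
    have hdl' : d l = {u0 + ((1:ℕ) : ZMod (n+5)), u0 + ((oz:ℕ) : ZMod (n+5))} := by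
      rw [hdl, hveq, hzrep]
    have hlne : (⟨0, by omega⟩ : Fin (n+2)) ≠ l := by
      intro h; rw [← h] at hl; simp at hl
    rcases Nat.lt_trichotomy oz 2 with hc | hc | hc
    · -- oz = 0
      have hoz0 : oz = 0 := by omega
      have hchl := hch l
      rw [hdl', hoz0, Finset.pair_comm, isChord_shift_iff _ (by omega) (by omega)] at hchl
      omega
    · -- oz = 2
      have hchl := hch l
      rw [hdl', hc, isChord_shift_iff _ (by omega) (by omega)] at hchl
      omega
    · -- oz ≥ 3 : crossing
      apply hnc _ _ hlne
      rw [hd0, hdl']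
      rw [chordsCross_shift_iff _ (by omega) (by omega) (by omega) (by omega)]
      omega
  | succ k IH =>
    intro hk hsnake l hl v hv o ho1 ho2 hveq
    have hk' : k ≤ n+1 := by omega
    have hsnake' : ∀ j, ∀ hj : j ≤ k, d ⟨j, by omega⟩ = snake a b j :=
      fun j hj => hsnake j (by omega)
    have hl' : k < l.val := by omega
    have htc := tc_succ b k
    have htle := tc_le b k
    obtain ⟨u0, hu0⟩ : ∃ x, x = sx a b (k+1) := ⟨_, rfl⟩
    rw [← hu0] at hveq
    obtain ⟨z, hzne, hdl⟩ := chord_other (hch l) hv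
    obtain ⟨oz, hoz⟩ : ∃ m, m = (z - u0).val := ⟨_, rfl⟩
    have hozlt : oz < n+5 := hoz ▸ ZMod.val_lt _
    have hzrep : z = u0 + (oz : ZMod (n+5)) := by rw [hoz]; exact base_rep u0 z
    have hozne : oz ≠ o := by
      intro h; rw [h] at hzrep; exact hzne (hzrep.trans hveq.symm)
    have hdk1 : d ⟨k+1, by omega⟩ =
        {u0 + ((0:ℕ) : ZMod (n+5)), u0 + ((k+1+2:ℕ) : ZMod (n+5))} := by
      rw [hsnake (k+1) (le_refl _), snake_rep_self, ← hu0]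
    have hdl' : d l = {u0 + ((o:ℕ) : ZMod (n+5)), u0 + ((oz:ℕ) : ZMod (n+5))} := by
      rw [hdl, hveq, hzrep]
    have hlne : (⟨k+1, by omega⟩ : Fin (n+2)) ≠ l := by
      intro h
      have : l.val = k+1 := by rw [← h]
      omega
    have hdk : d ⟨k, by omega⟩ = snake a b k := hsnake k (by omega)
    cases hbk : b k with
    | true =>
      -- x-move : tc (k+1) = tc k + 1
      have htc1 : tc b (k+1) = tc b k + 1 := by rw [htc, hbk]; simp
      have ex : sx a b k = u0 + ((1:ℕ) : ZMod (n+5)) := by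
        rw [hu0]
        unfold sx
        rw [htc1]
        push_cast
        ring
      have esy : sy a b (k+1) = sy a b k := by
        unfold sy
        rw [show k+1 - tc b (k+1) = k - tc b k by omega]
      have htrans : ∀ c : ℕ, 1 ≤ c → u0 + ((c:ℕ) : ZMod (n+5)) =
          sx a b k + ((c - 1 : ℕ) : ZMod (n+5)) := by
        intro c hc
        rw [ex, cast_split _ hc]
      rcases Nat.lt_or_ge 1 o with hc | hc
      · -- o ≥ 2 : v strictly inside arc k
        exact IH hk' hsnake' l hl' v hv (o-1) (by omega) (by omega)
          (by rw [hveq, htrans o (by omega)])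
      have ho : o = 1 := by omega
      subst ho
      rcases Nat.lt_trichotomy oz 2 with hz | hz | hz
      · -- oz ∈ {0} (oz ≠ 1)
        have hoz0 : oz = 0 := by omega
        have hchl := hch l
        rw [hdl', hoz0, Finset.pair_comm, isChord_shift_iff _ (by omega) (by omega)] at hchl
        omega
      · -- oz = 2 : gap-1 pair
        have hchl := hch l
        rw [hdl', hz, isChord_shift_iff _ (by omega) (by omega)] at hchl
        omega
      rcases Nat.lt_trichotomy oz (k+3) with hz4 | hz4 | hz4
      · -- 2 < oz < k+3 : z strictly inside arc k
        exact IH hk' hsnake' l hl' z (by rw [hdl]; simp) (oz-1) (by omega) (by omega)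
          (by rw [hzrep, htrans oz (by omega)])
      · -- oz = k+3 : d l = snake k, contradiction with injectivity
        have hzeq : z = sy a b k := by
          rw [hzrep, hz4, ← esy, sy_shift_self, ← hu0]
        have hveq' : v = sx a b k := by rw [hveq, ← ex]
        have e5 : ({v, z} : Finset (ZMod (n+5))) = {sx a b k, sy a b k} := by
          rw [hveq', hzeq]
        have e6 : d l = snake a b k := by rw [hdl, e5, snake]
        have e7 := hinj (e6.trans hdk.symm)
        have e8 : l.val = k := by rw [e7]
        omega
      · -- oz > k+3 : crossing
        apply hnc _ _ hlne
        rw [hdk1, hdl']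
        rw [chordsCross_shift_iff _ (by omega) (by omega) (by omega) (by omega)]
        omega
    | false =>
      -- y-move : tc (k+1) = tc k
      have htc1 : tc b (k+1) = tc b k := by rw [htc, hbk]; simp
      have ex : sx a b k = u0 := by
        rw [hu0]; unfold sx; rw [htc1]
      have esy : sy a b k = u0 + ((k+2:ℕ) : ZMod (n+5)) := by
        rw [← ex, sy_shift_self]
      rcases Nat.lt_or_ge o (k+2) with hc | hc
      · -- o < k+2 : directly inside arc k
        exact IH hk' hsnake' l hl' v hv o ho1 hc (by rw [hveq, ex])
      have ho : o = k+2 := by omega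
      subst ho
      -- v = sy a b k
      have hveq' : v = sy a b k := by rw [hveq, esy]
      rcases Nat.lt_trichotomy oz (k+1) with hz | hz | hz
      · -- oz < k+1
        rcases Nat.eq_zero_or_pos oz with hz0 | hz0
        · -- oz = 0 : d l = snake k
          have hzeq : z = sx a b k := by
            rw [hzrep, hz0, ex]; simp
          have e5 : ({v, z} : Finset (ZMod (n+5))) = {sx a b k, sy a b k} := by
            rw [hveq', hzeq, Finset.pair_comm]
          have e6 : d l = snake a b k := by rw [hdl, e5, snake]
          have e7 := hinj (e6.trans hdk.symm)
          have e8 : l.val = k := by rw [e7]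
          omega
        · -- 0 < oz < k+1 : z strictly inside arc k
          exact IH hk' hsnake' l hl' z (by rw [hdl]; simp) oz hz0 (by omega)
            (by rw [hzrep, ex])
      · -- oz = k+1 : gap-1 with v
        have hchl := hch l
        rw [hdl', hz, Finset.pair_comm, isChord_shift_iff _ (by omega) (by omega)] at hchl
        omega
      rcases Nat.lt_trichotomy oz (k+3) with hz4 | hz4 | hz4
      · -- oz = k+2 impossible (≠ o) ; so nothing here
        omega
      · -- oz = k+3 : gap-1 pair {k+2, k+3}
        have hchl := hch l
        rw [hdl', hz4, isChord_shift_iff _ (by omega) (by omega)] at hchl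
        omega
      · -- oz > k+3 : crossing
        apply hnc _ _ hlne
        rw [hdk1, hdl']
        rw [chordsCross_shift_iff _ (by omega) (by omega) (by omega) (by omega)]
        omega

lemma sy_plus_gap (a : ZMod (n+5)) (b : ℕ → Bool) {k : ℕ} (hk : k ≤ n+1) :
    sx a b k = sy a b k + ((n+3-k : ℕ) : ZMod (n+5)) := by
  rw [sy_shift_self, show n+3-k = n+5-(k+2) by omega,
    cast_split _ (show k+2 ≤ n+5 by omega), cast_n5]
  simp

lemma region_bound (d : Fin (n+2) → Finset (ZMod (n+5)))
    (hch : ∀ i, IsChord (d i)) (hinj : Function.Injective d)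
    (hnc : ∀ i j, i ≠ j → ¬ ChordsCross (d i) (d j))
    (a : ZMod (n+5)) (b : ℕ → Bool) {k : ℕ} (hk : k ≤ n+1)
    (hsnake : ∀ j, ∀ hj : j ≤ k, d ⟨j, by omega⟩ = snake a b j)
    (l : Fin (n+2)) (hl : k < l.val) {v : ZMod (n+5)} (hv : v ∈ d l) :
    ∃ o ≤ n+3-k, v = sy a b k + (o : ZMod (n+5)) := by
  have hov : v = sx a b k + (((v - sx a b k).val : ℕ) : ZMod (n+5)) := base_rep _ _
  set ov := (v - sx a b k).val with hovdef
  have hovlt : ov < n+5 := ZMod.val_lt _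
  have hno : ¬ (0 < ov ∧ ov < k+2) := by
    rintro ⟨h1, h2⟩
    exact lemA d hch hinj hnc a b k hk hsnake l hl v hv ov h1 h2 hov
  rcases Nat.eq_zero_or_pos ov with h0 | hpos
  · refine ⟨n+3-k, le_refl _, ?_⟩
    rw [h0] at hov
    simp at hov
    rw [hov, sy_plus_gap a b hk]
  · have hge : k + 2 ≤ ov := by omega
    refine ⟨ov - (k+2), by omega, ?_⟩
    rw [hov, ← cast_split (sx a b k) hge, ← sy_shift_self]

noncomputable def pns (u : ZMod (n+5)) (s : Finset (ZMod (n+5))) : ℕ × ℕ :=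
  if h : (s.image fun v => (v - u).val).Nonempty then
    ((s.image fun v => (v - u).val).min' h, (s.image fun v => (v - u).val).max' h)
  else (0, 0)

lemma pns_pair (u : ZMod (n+5)) {p q : ℕ} (hpq : p < q) (hp : p < n+5) (hq : q < n+5) :
    pns u ({u + (p : ZMod (n+5)), u + (q : ZMod (n+5))}) = (p, q) := by
  have himg : (({u + (p : ZMod (n+5)), u + (q : ZMod (n+5))} : Finset (ZMod (n+5))).image
      fun v => (v - u).val) = {p, q} := by
    rw [Finset.image_insert, Finset.image_singleton]
    congr 1
    · rw [show u + (p : ZMod (n+5)) - u = (p : ZMod (n+5)) by ring, val_cast hp]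
    · congr 1
      rw [show u + (q : ZMod (n+5)) - u = (q : ZMod (n+5)) by ring, val_cast hq]
  rw [pns, himg]
  have hne : ({p, q} : Finset ℕ).Nonempty := ⟨p, by simp⟩
  rw [dif_pos hne]
  have h1 : ({p, q} : Finset ℕ).min' hne = p := by
    apply le_antisymm
    · exact Finset.min'_le _ _ (by simp)
    · apply Finset.le_min'
      intro y hy
      rcases Finset.mem_insert.mp hy with rfl | hy'
      · exact le_refl _
      · rw [Finset.mem_singleton] at hy'; omega
  have h2 : ({p, q} : Finset ℕ).max' hne = q := by
    apply le_antisymm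
    · apply Finset.max'_le
      intro y hy
      rcases Finset.mem_insert.mp hy with rfl | hy'
      · omega
      · rw [Finset.mem_singleton] at hy'; omega
    · exact Finset.le_max' _ _ (by simp)
  rw [h1, h2]

lemma tc_congr {b b' : ℕ → Bool} {k : ℕ} (h : ∀ j < k, b j = b' j) : tc b k = tc b' k := by
  unfold tc
  congr 1
  apply Finset.filter_congr
  intro j hj
  rw [h j (Finset.mem_range.mp hj)]

lemma sx_congr (a : ZMod (n+5)) {b b' : ℕ → Bool} {k : ℕ} (h : ∀ j < k, b j = b' j) :
    sx a b k = sx a b' k := by unfold sx; rw [tc_congr h]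

lemma sy_congr (a : ZMod (n+5)) {b b' : ℕ → Bool} {k : ℕ} (h : ∀ j < k, b j = b' j) :
    sy a b k = sy a b' k := by unfold sy; rw [tc_congr h]

lemma snake_congr (a : ZMod (n+5)) {b b' : ℕ → Bool} {k : ℕ} (h : ∀ j < k, b j = b' j) :
    snake a b k = snake a b' k := by unfold snake; rw [sx_congr a h, sy_congr a h]

lemma snake_succ_true (a : ZMod (n+5)) {b : ℕ → Bool} {k : ℕ} (hbk : b k = true) :
    snake a b (k+1) = {sx a b k - 1, sy a b k} := by
  have h1 : sx a b (k+1) = sx a b k - 1 := by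
    unfold sx
    rw [tc_succ, hbk]
    simp only [if_true]
    push_cast
    ring
  have h2 : sy a b (k+1) = sy a b k := by
    unfold sy
    rw [tc_succ, hbk]
    have := tc_le b k
    rw [show k + 1 - (tc b k + if true then 1 else 0) = k - tc b k by simp]
  rw [snake, h1, h2]

lemma snake_succ_false (a : ZMod (n+5)) {b : ℕ → Bool} {k : ℕ} (hbk : b k = false) :
    snake a b (k+1) = {sx a b k, sy a b k + 1} := by
  have h1 : sx a b (k+1) = sx a b k := by
    unfold sx
    rw [tc_succ, hbk]
    simp
  have h2 : sy a b (k+1) = sy a b k + 1 := by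
    unfold sy
    rw [tc_succ, hbk]
    have := tc_le b k
    rw [show k + 1 - (tc b k + if false then 1 else 0) = (k - tc b k) + 1 by simp; omega]
    push_cast
    ring
  rw [snake, h1, h2]

lemma card_tail (k : ℕ) (hk : k ≤ n+1) :
    (Finset.univ.filter (fun l : Fin (n+2) => k < l.val)).card = n+1-k := by
  have h1 : (Finset.univ.filter (fun l : Fin (n+2) => k < l.val)).card
      = ((Finset.range (n+2)).filter (fun m => k < m)).card := by
    apply Finset.card_bij (fun l _ => l.val)
    · intro l hl
      rw [Finset.mem_filter] at hl ⊢
      exact ⟨Finset.mem_range.mpr l.isLt, hl.2⟩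
    · intro l1 h1 l2 h2 he
      exact Fin.ext he
    · intro m hm
      rw [Finset.mem_filter, Finset.mem_range] at hm
      exact ⟨⟨m, hm.1⟩, Finset.mem_filter.mpr ⟨Finset.mem_univ _, hm.2⟩, rfl⟩
  have h2 : ((Finset.range (n+2)).filter (fun m => k < m)) = Finset.Ico (k+1) (n+2) := by
    ext m
    simp [Finset.mem_filter, Finset.mem_range, Finset.mem_Ico]
    omega
  rw [h1, h2, Nat.card_Ico]
  omega

lemma lemStep (d : Fin (n+2) → Finset (ZMod (n+5)))
    (hch : ∀ i, IsChord (d i)) (hinj : Function.Injective d)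
    (hnc : ∀ i j, i ≠ j → ¬ ChordsCross (d i) (d j))
    (hntri : ¬ ∃ A B C : ZMod (n + 5),
      (∃ i, d i = {A, B}) ∧ (∃ i, d i = {B, C}) ∧ (∃ i, d i = {A, C}))
    (hlab : ∀ (A B C : ZMod (n + 5)) (i j : Fin (n + 2)), d i = {A, B} → d j = {B, C} →
      IsPolyEdge ({A, C} : Finset (ZMod (n + 5))) → ((i : ℕ) + 1 = j ∨ (j : ℕ) + 1 = i))
    (a : ZMod (n+5)) (b : ℕ → Bool) (k : ℕ) (hk : k ≤ n)
    (hsnake : ∀ j, ∀ hj : j ≤ k, d ⟨j, by omega⟩ = snake a b j) :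
    d ⟨k+1, by omega⟩ = {sx a b k - 1, sy a b k} ∨
    d ⟨k+1, by omega⟩ = {sx a b k, sy a b k + 1} := by
  have hkn1 : k ≤ n+1 := by omega
  obtain ⟨u, hu⟩ : ∃ u, u = sy a b k := ⟨_, rfl⟩
  have hux : sx a b k = u + ((n+3-k : ℕ) : ZMod (n+5)) := by
    rw [hu]; exact sy_plus_gap a b hkn1
  have hu0 : u = u + ((0 : ℕ) : ZMod (n+5)) := by simp
  have hdk : d ⟨k, by omega⟩ = snake a b k := hsnake k (le_refl k)
  have hdkpair : d ⟨k, by omega⟩ =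
      {u + ((n+3-k : ℕ) : ZMod (n+5)), u + ((0:ℕ) : ZMod (n+5))} := by
    rw [hdk, snake, hux, ← hu0, hu]
  -- representation of the chords beyond k
  have hrep : ∀ l : Fin (n+2), k < l.val → ∃ p q : ℕ, p + 2 ≤ q ∧ q ≤ n+3-k ∧
      d l = {u + (p : ZMod (n+5)), u + (q : ZMod (n+5))} ∧ pns u (d l) = (p, q) := by
    intro l hl
    obtain ⟨A, B, hAB, hab, -, -⟩ := hch l
    have hA : A ∈ d l := by rw [hAB]; simp
    have hB : B ∈ d l := by rw [hAB]; simp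
    obtain ⟨oa, hoale, hoa⟩ := region_bound d hch hinj hnc a b hkn1 hsnake l hl hA
    obtain ⟨ob, hoble, hob⟩ := region_bound d hch hinj hnc a b hkn1 hsnake l hl hB
    rw [← hu] at hoa hob
    have hone : oa ≠ ob := by
      rintro rfl
      exact hab (hoa.trans hob.symm)
    have main : ∀ p q : ℕ, p < q → q ≤ n+3-k →
        d l = {u + (p : ZMod (n+5)), u + (q : ZMod (n+5))} →
        ∃ p' q' : ℕ, p' + 2 ≤ q' ∧ q' ≤ n+3-k ∧
        d l = {u + (p' : ZMod (n+5)), u + (q' : ZMod (n+5))} ∧ pns u (d l) = (p', q') := by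
      intro p q hpq hqle hdl
      have hchl := hch l
      rw [hdl, isChord_shift_iff _ hpq (by omega)] at hchl
      refine ⟨p, q, hchl.1, hqle, hdl, ?_⟩
      rw [hdl]
      exact pns_pair u hpq (by omega) (by omega)
    rcases Nat.lt_or_ge oa ob with hc | hc
    · exact main oa ob hc hoble (by rw [hAB, hoa, hob])
    · have hc' : ob < oa := by omega
      exact main ob oa hc' hoale (by rw [hAB, Finset.pair_comm, hoa, hob])
  -- the finset of chords beyond k, as nat pairs
  obtain ⟨T, hT⟩ : ∃ T, T = (Finset.univ.filter (fun l : Fin (n+2) => k < l.val)).image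
      (fun l => pns u (d l)) := ⟨_, rfl⟩
  have hmemT : ∀ x ∈ T, ∃ l : Fin (n+2), k < l.val ∧
      d l = {u + (x.1 : ZMod (n+5)), u + (x.2 : ZMod (n+5))} ∧ x.1 + 2 ≤ x.2 ∧
      x.2 ≤ n+3-k := by
    intro x hx
    rw [hT] at hx
    obtain ⟨l, hl, he⟩ := Finset.mem_image.mp hx
    have hlk : k < l.val := (Finset.mem_filter.mp hl).2
    obtain ⟨p, q, h1, h2, h3, h4⟩ := hrep l hlk
    obtain rfl : x = (p, q) := he.symm.trans h4
    exact ⟨l, hlk, h3, h1, h2⟩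
  have hmemT' : ∀ l : Fin (n+2), k < l.val → pns u (d l) ∈ T := by
    intro l hl
    rw [hT]
    exact Finset.mem_image.mpr ⟨l, Finset.mem_filter.mpr ⟨Finset.mem_univ _, hl⟩, rfl⟩
  have hTcard : T.card = n+1-k := by
    rw [hT]
    rw [Finset.card_image_of_injOn, card_tail k hkn1]
    intro l1 h1 l2 h2 he
    have hl1 : k < l1.val := (Finset.mem_filter.mp h1).2
    have hl2 : k < l2.val := (Finset.mem_filter.mp h2).2
    obtain ⟨p1, q1, g1, g2, g3, g4⟩ := hrep l1 hl1
    obtain ⟨p2, q2, f1, f2, f3, f4⟩ := hrep l2 hl2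
    have hpq : (p1, q1) = (p2, q2) := (g4.symm.trans he).trans f4
    rw [Prod.mk.injEq] at hpq
    apply hinj
    rw [g3, f3, hpq.1, hpq.2]
  have hbnd : Bnd (n+4-k) T := by
    intro x hx
    obtain ⟨l, -, -, h1, h2⟩ := hmemT x hx
    exact ⟨h1, by omega⟩
  have hncT : NC T := by
    intro x hx y hy hxy
    obtain ⟨l1, hl1, e1, f1, f2⟩ := hmemT x hx
    obtain ⟨l2, hl2, e2, g1, g2⟩ := hmemT y hy
    have hlne : l1 ≠ l2 := by
      rintro rfl
      rw [e1] at e2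
      rcases pair_eq_pair_iff.mp e2 with ⟨c1, c2⟩ | ⟨c1, c2⟩
      · rw [shift_cast_inj _ (by omega) (by omega)] at c1
        rw [shift_cast_inj _ (by omega) (by omega)] at c2
        exact hxy (Prod.ext c1 c2)
      · rw [shift_cast_inj _ (by omega) (by omega)] at c1
        rw [shift_cast_inj _ (by omega) (by omega)] at c2
        omega
    have := hnc l1 l2 hlne
    rw [e1, e2, chordsCross_shift_iff _ (by omega) (by omega) (by omega) (by omega)] at this
    exact ⟨fun hcon => this (Or.inl ⟨hcon.1, hcon.2.1, hcon.2.2⟩),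
      fun hcon => this (Or.inr ⟨hcon.1, hcon.2.1, hcon.2.2⟩)⟩
  have hclT : (0, (n+4-k) - 1) ∉ T := by
    intro hmem
    obtain ⟨l, hl, he, -, -⟩ := hmemT _ hmem
    have he2 : d l = {u + ((0:ℕ) : ZMod (n+5)), u + (((n+4-k) - 1 : ℕ) : ZMod (n+5))} := he
    have he' : d l = d ⟨k, by omega⟩ := by
      rw [he2, hdkpair, Finset.pair_comm, show (n+4-k) - 1 = n+3-k by omega]
    have h10 : l.val = k := by simpa using congrArg Fin.val (hinj he')
    omega
  obtain ⟨w, hw1, hw2, hw3, hw4⟩ := lemB (n+4-k) (by omega) T hbnd hncT hclT (by omega)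
  have hL1 : (n+4-k) - 1 = n+3-k := by omega
  rw [hL1] at hw2 hw4
  rcases hw3 with hw3 | hw3 <;> rcases hw4 with hw4 | hw4
  · -- both chords : triangle, contradiction
    exfalso
    obtain ⟨l1, hl1, e1, -, -⟩ := hmemT _ hw3
    obtain ⟨l2, hl2, e2, -, -⟩ := hmemT _ hw4
    have e1' : d l1 = {u + ((0:ℕ) : ZMod (n+5)), u + ((w:ℕ) : ZMod (n+5))} := e1
    have e2' : d l2 = {u + ((w:ℕ) : ZMod (n+5)), u + ((n+3-k:ℕ) : ZMod (n+5))} := e2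
    apply hntri
    exact ⟨u + ((0:ℕ) : ZMod (n+5)), u + ((w:ℕ) : ZMod (n+5)),
      u + ((n+3-k : ℕ) : ZMod (n+5)), ⟨l1, e1'⟩, ⟨l2, e2'⟩,
      ⟨⟨k, by omega⟩, by rw [hdkpair, Finset.pair_comm]⟩⟩
  · -- (0,w) ∈ T and w+1 = n+3-k : x-move
    left
    obtain ⟨l1, hl1, e1, f1, f2⟩ := hmemT _ hw3
    have e1' : d l1 = {u + ((0:ℕ) : ZMod (n+5)), u + ((w:ℕ) : ZMod (n+5))} := e1
    have hlabel := hlab (u + ((n+3-k:ℕ) : ZMod (n+5))) u (u + ((w:ℕ) : ZMod (n+5)))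
      ⟨k, by omega⟩ l1 (by rw [hdkpair, ← hu0]) (by rw [e1', ← hu0]) ?pe
    case pe =>
      rw [Finset.pair_comm, isPolyEdge_shift_iff _ (by omega) (by omega)]
      omega
    have hlabel' : k + 1 = (l1.val : ℕ) ∨ l1.val + 1 = k := by simpa using hlabel
    have hl1v : l1.val = k+1 := by omega
    have hl1e : l1 = ⟨k+1, by omega⟩ := Fin.ext hl1v
    rw [← hl1e, e1', Finset.pair_comm]
    congr 1
    · rw [hux, show n+3-k = w+1 by omega]
      push_cast
      ring
    · rw [← hu0, hu]
  · -- w = 1 and (w, n+3-k) ∈ T : y-move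
    right
    obtain ⟨l2, hl2, e2, f1, f2⟩ := hmemT _ hw4
    have e2' : d l2 = {u + ((w:ℕ) : ZMod (n+5)), u + ((n+3-k:ℕ) : ZMod (n+5))} := e2
    have hlabel := hlab u (u + ((n+3-k:ℕ) : ZMod (n+5))) (u + ((w:ℕ) : ZMod (n+5)))
      ⟨k, by omega⟩ l2 (by rw [hdkpair, Finset.pair_comm, ← hu0])
      (by rw [e2', Finset.pair_comm]) ?pe2
    case pe2 =>
      exact ⟨u, by rw [hw3, Nat.cast_one]⟩
    have hlabel' : k + 1 = (l2.val : ℕ) ∨ l2.val + 1 = k := by simpa using hlabel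
    have hl2v : l2.val = k+1 := by omega
    have hl2e : l2 = ⟨k+1, by omega⟩ := Fin.ext hl2v
    rw [← hl2e, e2', Finset.pair_comm]
    congr 1
    · rw [hux]
    · rw [hw3, Nat.cast_one, hu]
  · omega

theorem F_surj (d : Fin (n+2) → Finset (ZMod (n+5))) (h : IsCTFT d) :
    ∃ a bf, F a bf = d := by
  obtain ⟨hch, hinj, hnc, hntri, hshort, hlab⟩ := h
  obtain ⟨a, ha⟩ := hshort
  have P : ∀ k, ∀ hk : k ≤ n+1, ∃ b : ℕ → Bool, ∀ j, ∀ hj : j ≤ k,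
      d ⟨j, by omega⟩ = snake a b j := by
    intro k
    induction k with
    | zero =>
      intro _
      refine ⟨fun _ => false, fun j hj => ?_⟩
      have hj0 : j = 0 := by omega
      subst hj0
      have h00 : (⟨0, by omega⟩ : Fin (n+2)) = 0 := by apply Fin.ext; simp
      rw [h00, ha, snake_zero]
    | succ k IH =>
      intro hk1
      have hk : k ≤ n := by omega
      obtain ⟨b, hb⟩ := IH (by omega)
      rcases lemStep d hch hinj hnc hntri hlab a b k hk hb with hcase | hcase
      · refine ⟨Function.update b k true, fun j hj => ?_⟩
        have hagree : ∀ i < k, b i = Function.update b k true i :=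
          fun i hi => (Function.update_of_ne (by omega) _ _).symm
        rcases Nat.lt_or_ge j (k+1) with hj' | hj'
        · rw [hb j (by omega), snake_congr a
            (fun i hi => (Function.update_of_ne (show i ≠ k by omega) _ _).symm)]
        · have hje : j = k+1 := by omega
          subst hje
          rw [snake_succ_true a (Function.update_self k true b),
            ← sx_congr a hagree, ← sy_congr a hagree]
          exact hcase
      · refine ⟨Function.update b k false, fun j hj => ?_⟩
        have hagree : ∀ i < k, b i = Function.update b k false i :=
          fun i hi => (Function.update_of_ne (by omega) _ _).symm
        rcases Nat.lt_or_ge j (k+1) with hj' | hj'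
        · rw [hb j (by omega), snake_congr a
            (fun i hi => (Function.update_of_ne (show i ≠ k by omega) _ _).symm)]
        · have hje : j = k+1 := by omega
          subst hje
          rw [snake_succ_false a (Function.update_self k false b),
            ← sx_congr a hagree, ← sy_congr a hagree]
          exact hcase
  obtain ⟨b, hb⟩ := P (n+1) (le_refl _)
  refine ⟨a, fun j => b j.val, funext fun i => ?_⟩
  show snake a (extb (fun j => b j.val)) i.val = d i
  have hag : ∀ j < i.val, extb (fun j : Fin (n+1) => b j.val) j = b j := by
    intro j hj
    have hjlt : j < n+1 := by have := i.isLt; omega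
    simp [extb, hjlt]
  rw [(snake_congr a (fun j hj => (hag j hj).symm)).symm]
  have : d i = d ⟨i.val, by omega⟩ := by congr
  rw [this, hb i.val (by have := i.isLt; omega)]

end CTFT


/-- The number of colored triangle-free triangulations of a convex `n`-gon is
`n·2^(n-4)`, for `n ≥ 5` (here `n` is `n+5`). -/
theorem stmt0 (n : ℕ) :
    Nat.card {d : Fin (n + 2) → Finset (ZMod (n + 5)) // IsCTFT d} =
      (n + 5) * 2 ^ (n + 1) := by
  have e : (ZMod (n+5) × (Fin (n+1) → Bool)) ≃
      {d : Fin (n + 2) → Finset (ZMod (n + 5)) // IsCTFT d} := by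
    apply Equiv.ofBijective (fun ab => ⟨CTFT.F ab.1 ab.2, CTFT.F_isCTFT ab.1 ab.2⟩)
    constructor
    · rintro ⟨a, b⟩ ⟨a', b'⟩ hab
      have : CTFT.F a b = CTFT.F a' b' := congrArg Subtype.val hab
      obtain ⟨h1, h2⟩ := CTFT.F_inj a a' b b' this
      rw [Prod.mk.injEq]
      exact ⟨h1, h2⟩
    · rintro ⟨d, hd⟩
      obtain ⟨a, bf, he⟩ := CTFT.F_surj d hd
      exact ⟨(a, bf), Subtype.ext he⟩
  rw [← Nat.card_congr e, Nat.card_prod, Nat.card_zmod]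
  congr 1
  rw [Nat.card_eq_fintype_card]
  simp
end

section
/- The number of arc permutations in S_n equals n·2^(n-2), for n ≥ 2. -/
set_option linter.unusedSectionVars false
set_option maxHeartbeats 1000000

/-- A subset of the cyclic group `ZMod n` is a cyclic interval if it has the
form `{a, a+1, ..., a+k-1}`. -/
def IsCyclicInterval {n : ℕ} [NeZero n] (s : Finset (ZMod n)) : Prop :=
  ∃ a : ZMod n, s = (Finset.range s.card).image fun j : ℕ => a + (j : ZMod n)

/-- A permutation of `ZMod n` (positions ordered by their canonical
representatives, i.e. `[π(1),...,π(n)]` with `n` identified with `0`) is an arc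
permutation if every prefix of values forms an interval in the cyclic group
`ZMod n`. -/
def IsArcPerm {n : ℕ} [NeZero n] (π : Equiv.Perm (ZMod n)) : Prop :=
  ∀ k : ℕ,
    IsCyclicInterval ((Finset.univ.filter fun x : ZMod n => x.val < k).image π)

namespace ArcAux

variable {m : ℕ} [NeZero m]

/-- The cyclic interval of length `k` starting at `b`. -/
def Iv (b : ZMod m) (k : ℕ) : Finset (ZMod m) :=
  (Finset.range k).image fun j : ℕ => b + (j : ZMod m)

lemma mem_Iv {b : ZMod m} {k : ℕ} (hk : k ≤ m) (x : ZMod m) :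
    x ∈ Iv b k ↔ (x - b).val < k := by
  constructor
  · rintro hx
    simp only [Iv, Finset.mem_image, Finset.mem_range] at hx
    obtain ⟨j, hj, rfl⟩ := hx
    simpa [ZMod.val_cast_of_lt (lt_of_lt_of_le hj hk)] using hj
  · intro h
    simp only [Iv, Finset.mem_image, Finset.mem_range]
    exact ⟨(x - b).val, h, by rw [ZMod.natCast_rightInverse (x - b)]; ring⟩

lemma card_Iv {b : ZMod m} {k : ℕ} (hk : k ≤ m) : (Iv b k).card = k := by
  rw [Iv, Finset.card_image_of_injOn, Finset.card_range]
  intro i hi j hj hij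
  simp only [Finset.coe_range, Set.mem_Iio] at hi hj
  have : ((i : ZMod m)) = j := add_left_cancel hij
  have := congrArg ZMod.val this
  rwa [ZMod.val_cast_of_lt (lt_of_lt_of_le hi hk),
    ZMod.val_cast_of_lt (lt_of_lt_of_le hj hk)] at this

lemma Iv_succ_top (b : ZMod m) (k : ℕ) : Iv b (k + 1) = insert (b + (k : ZMod m)) (Iv b k) := by
  simp only [Iv, Finset.range_add_one, Finset.image_insert]

lemma Iv_succ_bot (b : ZMod m) (k : ℕ) : Iv (b - 1) (k + 1) = insert (b - 1) (Iv b k) := by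
  ext x
  simp only [Iv, Finset.mem_image, Finset.mem_range, Finset.mem_insert]
  constructor
  · rintro ⟨j, hj, rfl⟩
    cases j with
    | zero => left; simp
    | succ i =>
      right
      exact ⟨i, by omega, by push_cast; ring⟩
  · rintro (rfl | ⟨i, hi, rfl⟩)
    · exact ⟨0, by omega, by simp⟩
    · exact ⟨i + 1, by omega, by push_cast; ring⟩

/-- number of `true`s among `g 0, ..., g (j-1)`. -/
def T (g : ℕ → Bool) (j : ℕ) : ℕ := ((Finset.range j).filter fun i => g i = true).card

lemma T_le (g : ℕ → Bool) (j : ℕ) : T g j ≤ j :=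
  le_trans (Finset.card_filter_le _ _) (by simp)

lemma T_succ (g : ℕ → Bool) (j : ℕ) :
    T g (j + 1) = T g j + if g j then 1 else 0 := by
  unfold T
  rw [Finset.range_add_one, Finset.filter_insert]
  by_cases h : g j = true
  · simp [h, Finset.card_insert_of_notMem]
  · simp [h]

/-- Value sequence: `e g j` is the signed offset of the `j`-th value. -/
def e (g : ℕ → Bool) : ℕ → ℤ
  | 0 => 0
  | j + 1 => if g j then (T g (j + 1) : ℤ) else -((j + 1 - T g (j + 1) : ℕ) : ℤ)

def v (a : ZMod m) (g : ℕ → Bool) (j : ℕ) : ZMod m := a + ((e g j : ℤ) : ZMod m)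

lemma image_v (a : ZMod m) (g : ℕ → Bool) (j : ℕ) :
    (Finset.range (j + 1)).image (v a g) = Iv (a - ((j - T g j : ℕ) : ZMod m)) (j + 1) := by
  induction j with
  | zero =>
    simp [v, Iv, e, T]
  | succ j ih =>
    rw [Finset.range_add_one, Finset.image_insert, ih]
    have hT := T_le g j
    by_cases h : g j = true
    · have hTs : T g (j + 1) = T g j + 1 := by rw [T_succ, if_pos h]
      have h1 : v a g (j + 1) = (a - ((j - T g j : ℕ) : ZMod m)) + ((j + 1 : ℕ) : ZMod m) := by
        unfold v
        rw [show e g (j + 1) = (T g (j + 1) : ℤ) from if_pos h, hTs]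
        have : ((j - T g j : ℕ) : ZMod m) + ((T g j + 1 : ℕ) : ZMod m) = ((j + 1 : ℕ) : ZMod m) := by
          rw [← Nat.cast_add]; congr 1; omega
        push_cast at this ⊢
        linear_combination this
      have h2 : ((j + 1 - T g (j + 1) : ℕ) : ZMod m) = ((j - T g j : ℕ) : ZMod m) := by
        congr 1; omega
      rw [h1, h2]
      rw [show Iv (a - ((j - T g j : ℕ) : ZMod m)) (j + 1 + 1)
        = insert ((a - ((j - T g j : ℕ) : ZMod m)) + ((j + 1 : ℕ) : ZMod m))
          (Iv (a - ((j - T g j : ℕ) : ZMod m)) (j + 1)) from by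
          have := Iv_succ_top (a - ((j - T g j : ℕ) : ZMod m)) (j + 1)
          simpa using this]
    · have hb : g j = false := by simp at h; exact h
      have hTs : T g (j + 1) = T g j := by rw [T_succ, hb]; simp
      have h1 : v a g (j + 1) = (a - ((j - T g j : ℕ) : ZMod m)) - 1 := by
        unfold v
        rw [show e g (j + 1) = -((j + 1 - T g (j + 1) : ℕ) : ℤ) from by rw [e]; simp [hb], hTs]
        have : ((j + 1 - T g j : ℕ) : ZMod m) = ((j - T g j : ℕ) : ZMod m) + 1 := by
          rw [show (j + 1 - T g j) = (j - T g j) + 1 by omega]; push_cast; ring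
        push_cast at this ⊢
        linear_combination -this
      have h2 : (a - ((j + 1 - T g (j + 1) : ℕ) : ZMod m))
          = (a - ((j - T g j : ℕ) : ZMod m)) - 1 := by
        rw [hTs, show (j + 1 - T g j) = (j - T g j) + 1 by omega]
        push_cast; ring
      rw [h1, h2]
      exact (Iv_succ_bot (a - ((j - T g j : ℕ) : ZMod m)) (j + 1)).symm

lemma injOn_v (a : ZMod m) (g : ℕ → Bool) :
    Set.InjOn (v a g) (Finset.range m : Finset ℕ) := by
  rw [← Finset.card_image_iff]
  obtain ⟨m', rfl⟩ : ∃ m', m = m' + 1 := ⟨m - 1, by have := NeZero.pos m; omega⟩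
  rw [image_v, card_Iv le_rfl, Finset.card_range]

/-- Two permutations agreeing away from a point agree there too. -/
lemma perm_apply_eq_of_forall_ne {α : Type*} (σ τ : Equiv.Perm α) (x₀ : α)
    (h : ∀ x, x ≠ x₀ → σ x = τ x) : σ x₀ = τ x₀ := by
  by_contra hne
  have h1 : τ.symm (σ x₀) ≠ x₀ := by
    intro he
    exact hne ((τ.apply_symm_apply _).symm.trans (congrArg τ he))
  have h2 := h _ h1
  rw [τ.apply_symm_apply] at h2
  exact h1 (σ.injective h2)

lemma nested {c c' : ZMod m} {k : ℕ} (hk1 : 1 ≤ k) (hk : k + 1 < m)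
    (h : Iv c k ⊆ Iv c' (k + 1)) : c' = c ∨ c' = c - 1 := by
  have hkm : k ≤ m := by omega
  have hk1m : k + 1 ≤ m := by omega
  have hc : c ∈ Iv c k := (mem_Iv hkm c).mpr (by simp; omega)
  have hd : (c - c').val < k + 1 := (mem_Iv hk1m c).mp (h hc)
  have hcc' : c - c' = ((c - c').val : ZMod m) := (ZMod.natCast_rightInverse (c - c')).symm
  set d := (c - c').val with hdval
  rcases Nat.lt_or_ge d 2 with hd2 | hd2
  · interval_cases d
    · left
      have : c - c' = 0 := by rw [hcc']; simp
      linear_combination -this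
    · right
      have : c - c' = 1 := by rw [hcc']; simp
      linear_combination -this
  · exfalso
    have hdk : d ≤ k := by omega
    have hx : c + ((k - d + 1 : ℕ) : ZMod m) ∈ Iv c k := by
      rw [mem_Iv hkm]
      have : (c + ((k - d + 1 : ℕ) : ZMod m) - c) = ((k - d + 1 : ℕ) : ZMod m) := by ring
      rw [this, ZMod.val_cast_of_lt (by omega)]
      omega
    have := (mem_Iv hk1m _).mp (h hx)
    have heq : c + ((k - d + 1 : ℕ) : ZMod m) - c' = ((k + 1 : ℕ) : ZMod m) := by
      have : c + ((k - d + 1 : ℕ) : ZMod m) - c' = (c - c') + ((k - d + 1 : ℕ) : ZMod m) := by ring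
      rw [this, hcc', ← Nat.cast_add]
      congr 1
      omega
    rw [heq, ZMod.val_cast_of_lt (by omega)] at this
    omega

lemma T_congr {g g' : ℕ → Bool} {j : ℕ} (h : ∀ i < j, g i = g' i) : T g j = T g' j := by
  unfold T
  congr 1
  apply Finset.filter_congr
  intro i hi
  rw [Finset.mem_range] at hi
  rw [h i hi]

lemma v_zero (a : ZMod m) (g : ℕ → Bool) : v a g 0 = a := by
  simp [v, e]

/-- restriction of a prefix-image to the canonical positions -/
lemma image_filter_eq (φ : ZMod m → ZMod m) {k : ℕ} (hk : k ≤ m) :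
    (Finset.univ.filter fun x : ZMod m => x.val < k).image φ
      = (Finset.range k).image fun j : ℕ => φ ((j : ℕ) : ZMod m) := by
  ext y
  simp only [Finset.mem_image, Finset.mem_filter, Finset.mem_univ, true_and, Finset.mem_range]
  constructor
  · rintro ⟨x, hx, rfl⟩
    exact ⟨x.val, hx, by rw [ZMod.natCast_rightInverse x]⟩
  · rintro ⟨j, hj, rfl⟩
    exact ⟨(j : ZMod m), by rw [ZMod.val_cast_of_lt (lt_of_lt_of_le hj hk)]; exact hj, rfl⟩

/-- the extension of `f : Fin n → Bool` to `ℕ → Bool` (ending with `true`). -/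
def gext (n : ℕ) (f : Fin n → Bool) : ℕ → Bool := fun i => if h : i < n then f ⟨i, h⟩ else true

lemma D_bij (n : ℕ) (a : ZMod (n + 2)) (f : Fin n → Bool) :
    Function.Bijective (fun x : ZMod (n + 2) => v a (gext n f) x.val) := by
  rw [← Finite.injective_iff_bijective]
  intro x y hxy
  have hx : (x.val : ℕ) ∈ (Finset.range (n + 2) : Finset ℕ) := by
    simp [ZMod.val_lt]
  have hy : (y.val : ℕ) ∈ (Finset.range (n + 2) : Finset ℕ) := by
    simp [ZMod.val_lt]
  have := injOn_v a (gext n f) (by simpa using ZMod.val_lt x) (by simpa using ZMod.val_lt y) hxy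
  calc x = ((x.val : ℕ) : ZMod (n + 2)) := (ZMod.natCast_rightInverse x).symm
  _ = ((y.val : ℕ) : ZMod (n + 2)) := by rw [this]
  _ = y := ZMod.natCast_rightInverse y

/-- The decoder permutation. -/
noncomputable def D (n : ℕ) (a : ZMod (n + 2)) (f : Fin n → Bool) : Equiv.Perm (ZMod (n + 2)) :=
  Equiv.ofBijective _ (D_bij n a f)

lemma D_apply (n : ℕ) (a : ZMod (n + 2)) (f : Fin n → Bool) (x : ZMod (n + 2)) :
    D n a f x = v a (gext n f) x.val := rfl

lemma isArcPerm_D (n : ℕ) (a : ZMod (n + 2)) (f : Fin n → Bool) :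
    IsArcPerm (D n a f) := by
  intro k
  have hfe : (Finset.univ.filter fun x : ZMod (n + 2) => x.val < k)
      = (Finset.univ.filter fun x : ZMod (n + 2) => x.val < min k (n + 2)) := by
    ext x
    have := ZMod.val_lt x
    simp only [Finset.mem_filter, Finset.mem_univ, true_and]
    omega
  rw [hfe]
  have hmin : min k (n + 2) ≤ n + 2 := min_le_right _ _
  rcases Nat.eq_zero_or_pos (min k (n + 2)) with h0 | hpos
  · rw [h0]
    refine ⟨0, ?_⟩
    have : (Finset.univ.filter fun x : ZMod (n + 2) => x.val < 0) = ∅ := by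
      ext x; simp
    rw [this]
    simp
  · obtain ⟨j, hj⟩ : ∃ j, min k (n + 2) = j + 1 := ⟨min k (n + 2) - 1, by omega⟩
    rw [hj] at hmin ⊢
    rw [image_filter_eq _ hmin]
    have himeq : ((Finset.range (j + 1)).image fun i : ℕ => D n a f ((i : ℕ) : ZMod (n + 2)))
        = (Finset.range (j + 1)).image (v a (gext n f)) := by
      apply Finset.image_congr
      intro i hi
      simp only [Finset.coe_range, Set.mem_Iio] at hi
      show D n a f ((i : ℕ) : ZMod (n + 2)) = v a (gext n f) i
      rw [D_apply, ZMod.val_cast_of_lt (lt_of_lt_of_le hi hmin)]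
    rw [himeq, image_v]
    refine ⟨a - ((j - T (gext n f) j : ℕ) : ZMod (n + 2)), ?_⟩
    rw [card_Iv hmin]
    rfl

lemma D_injective (n : ℕ) : Function.Injective fun p : ZMod (n + 2) × (Fin n → Bool) => D n p.1 p.2 := by
  rintro ⟨a, f⟩ ⟨a', f'⟩ hD
  simp only at hD
  have happ : ∀ x : ZMod (n + 2), v a (gext n f) x.val = v a' (gext n f') x.val := by
    intro x
    have := DFunLike.congr_fun hD x
    rwa [D_apply, D_apply] at this
  have ha : a = a' := by
    have := happ 0
    rwa [ZMod.val_zero, v_zero, v_zero] at this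
  subst ha
  have key : ∀ (g g' : ℕ → Bool) (j : ℕ), j < n → T g j = T g' j → g j = true → g' j = false →
      ((e g (j + 1) : ℤ) : ZMod (n + 2)) = ((e g' (j + 1) : ℤ) : ZMod (n + 2)) → False := by
    intro g g' j hjn hT hg hg' hcast
    have he1 : e g (j + 1) = (T g j + 1 : ℤ) := by
      rw [e, if_pos hg, T_succ, hg]
      simp
    have he2 : e g' (j + 1) = -((j : ℤ) + 1 - T g j) := by
      rw [e, if_neg (by simp [hg']), T_succ, hg']
      have h1 : T g' j ≤ j := T_le g' j
      simp only [Bool.false_eq_true, if_false, add_zero]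
      rw [Nat.cast_sub (by omega), ← hT]
      push_cast
      ring
    rw [he1, he2] at hcast
    have hdvd : ((n : ℤ) + 2) ∣ (-((j : ℤ) + 1 - T g j) - (T g j + 1)) := by
      have := (ZMod.intCast_eq_intCast_iff _ _ _).mp hcast
      exact Int.ModEq.dvd this
    have hTj : T g j ≤ j := T_le g j
    have : ((n : ℤ) + 2) ∣ ((j : ℤ) + 2) := by
      have h2 : (-((j : ℤ) + 1 - T g j) - (T g j + 1)) = -((j : ℤ) + 2) := by ring
      rw [h2] at hdvd
      exact (dvd_neg).mp hdvd
    have := Int.le_of_dvd (by positivity) this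
    omega
  have hg : ∀ j, gext n f j = gext n f' j := by
    intro j
    induction j using Nat.strong_induction_on with
    | _ j ih =>
      by_cases hjn : j < n
      · by_contra hne
        have hT : T (gext n f) j = T (gext n f') j := T_congr fun i hi => ih i hi
        have hv := happ ((j + 1 : ℕ) : ZMod (n + 2))
        rw [ZMod.val_cast_of_lt (by omega)] at hv
        have hcast : ((e (gext n f) (j + 1) : ℤ) : ZMod (n + 2))
            = ((e (gext n f') (j + 1) : ℤ) : ZMod (n + 2)) := by
          have := hv
          unfold v at this
          exact add_left_cancel this
        cases hgj : gext n f j <;> cases hgj' : gext n f' j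
        · exact hne (hgj.trans hgj'.symm)
        · exact key _ _ j hjn hT.symm hgj' hgj hcast.symm
        · exact key _ _ j hjn hT hgj hgj' hcast
        · exact hne (hgj.trans hgj'.symm)
      · simp [gext, dif_neg hjn]
  have hf : f = f' := by
    funext j
    have := hg j.val
    simpa [gext, dif_pos j.isLt] using this
  rw [hf]

lemma D_surjective (n : ℕ) (π : Equiv.Perm (ZMod (n + 2))) (hπ : IsArcPerm π) :
    ∃ (a : ZMod (n + 2)) (f : Fin n → Bool), D n a f = π := by
  set a : ZMod (n + 2) := π 0 with ha
  set f : Fin n → Bool := fun j => decide (π (((j : ℕ) + 1 : ℕ) : ZMod (n + 2)) + 1 ∉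
    (Finset.univ.filter fun x : ZMod (n + 2) => x.val < (j : ℕ) + 1).image π) with hf
  set g : ℕ → Bool := gext n f with hg
  have claim : ∀ j, j ≤ n →
      (∀ i, i ≤ j → π ((i : ℕ) : ZMod (n + 2)) = v a g i) ∧
      ((Finset.univ.filter fun x : ZMod (n + 2) => x.val < j + 1).image π
        = Iv (a - ((j - T g j : ℕ) : ZMod (n + 2))) (j + 1)) := by
    intro j
    induction j with
    | zero =>
      intro _
      constructor
      · intro i hi
        have : i = 0 := by omega
        subst this
        rw [Nat.cast_zero, v_zero]
      · have h1 : (Finset.univ.filter fun x : ZMod (n + 2) => x.val < 0 + 1) = {0} := by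
          ext x
          simp only [Finset.mem_filter, Finset.mem_univ, true_and, Finset.mem_singleton,
            ← ZMod.val_eq_zero]
          omega
        have h2 : Iv (a - ((0 - T g 0 : ℕ) : ZMod (n + 2))) (0 + 1) = {a} := by
          simp [Iv, T]
        rw [h1, h2, Finset.image_singleton]
    | succ j ih =>
      intro hj1
      obtain ⟨ihv, ihP⟩ := ih (by omega)
      set c : ZMod (n + 2) := a - ((j - T g j : ℕ) : ZMod (n + 2)) with hc
      set x : ZMod (n + 2) := π (((j + 1 : ℕ)) : ZMod (n + 2)) with hxdef
      have hjm : j + 1 < n + 2 := by omega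
      have hTj : T g j ≤ j := T_le g j
      have hx_not : x ∉ Iv c (j + 1) := by
        rw [← ihP]
        intro hmem
        simp only [Finset.mem_image, Finset.mem_filter, Finset.mem_univ, true_and] at hmem
        obtain ⟨y, hy, hyx⟩ := hmem
        have : y = ((j + 1 : ℕ) : ZMod (n + 2)) := π.injective hyx
        rw [this, ZMod.val_cast_of_lt hjm] at hy
        omega
      have hfilter : (Finset.univ.filter fun y : ZMod (n + 2) => y.val < j + 1 + 1)
          = insert (((j + 1 : ℕ)) : ZMod (n + 2))
            (Finset.univ.filter fun y : ZMod (n + 2) => y.val < j + 1) := by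
        ext y
        simp only [Finset.mem_filter, Finset.mem_univ, true_and, Finset.mem_insert]
        constructor
        · intro hy
          rcases Nat.lt_or_ge y.val (j + 1) with h | h
          · exact Or.inr h
          · left
            have : y.val = j + 1 := by omega
            rw [← this, ZMod.natCast_rightInverse y]
        · rintro (rfl | hy)
          · rw [ZMod.val_cast_of_lt hjm]; omega
          · omega
      have P2eq : (Finset.univ.filter fun y : ZMod (n + 2) => y.val < j + 1 + 1).image π
          = insert x (Iv c (j + 1)) := by
        rw [hfilter, Finset.image_insert, ihP]
      have hP2card : ((Finset.univ.filter fun y : ZMod (n + 2) => y.val < j + 1 + 1).image π).card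
          = j + 2 := by
        rw [P2eq, Finset.card_insert_of_notMem hx_not, card_Iv (by omega)]
      obtain ⟨c', hc'⟩ := hπ (j + 1 + 1)
      rw [hP2card] at hc'
      have hc'' : insert x (Iv c (j + 1)) = Iv c' (j + 2) := by
        rw [← P2eq, hc']; rfl
      have hsub : Iv c (j + 1) ⊆ Iv c' (j + 2) := by
        rw [← hc'']
        exact Finset.subset_insert _ _
      have hxmem : x ∈ Iv c' (j + 2) := by
        rw [← hc'']
        exact Finset.mem_insert_self _ _
      have hfj : g j = decide (x + 1 ∉ Iv c (j + 1)) := by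
        rw [hg, gext, dif_pos (show j < n by omega), hf]
        simp only [← ihP]
        rfl
      rcases nested (by omega) (by omega) hsub with rfl | rfl
      · -- right extension : c' = c
        have hxval : (x - c).val < j + 2 := (mem_Iv (by omega) x).mp hxmem
        have hxval2 : ¬ (x - c).val < j + 1 := fun h => hx_not ((mem_Iv (by omega) x).mpr h)
        have hxc : x = c + ((j + 1 : ℕ) : ZMod (n + 2)) := by
          have h1 : (x - c).val = j + 1 := by omega
          calc x = c + (x - c) := by ring
            _ = c + (((x - c).val : ℕ) : ZMod (n + 2)) := by rw [ZMod.natCast_rightInverse]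
            _ = c + ((j + 1 : ℕ) : ZMod (n + 2)) := by rw [h1]
        have hxp1 : x + 1 = c + ((j + 2 : ℕ) : ZMod (n + 2)) := by
          rw [hxc]; push_cast; ring
        have hnot1 : x + 1 ∉ Iv c (j + 1) := by
          rw [mem_Iv (by omega), hxp1]
          have : c + ((j + 2 : ℕ) : ZMod (n + 2)) - c = ((j + 2 : ℕ) : ZMod (n + 2)) := by ring
          rw [this, ZMod.val_cast_of_lt (by omega)]
          omega
        have hbit : g j = true := by rw [hfj]; simpa using hnot1
        have hTs : T g (j + 1) = T g j + 1 := by rw [T_succ, hbit]; simp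
        have hval : v a g (j + 1) = c + ((j + 1 : ℕ) : ZMod (n + 2)) := by
          rw [v, show e g (j + 1) = (T g (j + 1) : ℤ) from by rw [e, if_pos hbit], hTs, hc]
          have hcast : ((j - T g j : ℕ) : ZMod (n + 2)) + ((T g j + 1 : ℕ) : ZMod (n + 2))
              = ((j + 1 : ℕ) : ZMod (n + 2)) := by
            rw [← Nat.cast_add]; congr 1; omega
          push_cast at hcast ⊢
          linear_combination hcast
        constructor
        · intro i hi
          rcases Nat.lt_or_ge i (j + 1) with h | h
          · exact ihv i (by omega)
          · have : i = j + 1 := by omega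
            subst this
            rw [← hxdef, hxc, ← hval]
        · have hstart : a - ((j + 1 - T g (j + 1) : ℕ) : ZMod (n + 2)) = c := by
            rw [hTs, hc]
            congr 2
            omega
          rw [P2eq, hc'', hstart]
      · -- left extension : c' = c - 1
        have hxval : (x - (c - 1)).val < j + 2 := (mem_Iv (by omega) x).mp hxmem
        have hxc : x = c - 1 := by
          rcases hw : (x - c + 1).val with _ | u
          · have h0 : x - c + 1 = 0 := by
              rw [← ZMod.val_eq_zero, hw]
            linear_combination h0
          · exfalso
            have hu2 : u + 1 < n + 2 := by
              rw [← hw]; exact ZMod.val_lt _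
            have hxcu : x - c = ((u : ℕ) : ZMod (n + 2)) := by
              have : x - c + 1 = (((u + 1 : ℕ)) : ZMod (n + 2)) := by
                rw [← hw, ZMod.natCast_rightInverse]
              push_cast at this
              linear_combination this
            have hulj : u + 1 < j + 2 := by
              have : x - (c - 1) = x - c + 1 := by ring
              rw [this, hw] at hxval
              omega
            apply hx_not
            rw [mem_Iv (by omega), hxcu, ZMod.val_cast_of_lt (by omega)]
            omega
        have hmem1 : x + 1 ∈ Iv c (j + 1) := by
          rw [hxc, mem_Iv (by omega)]
          simp
        have hbit : g j = false := by rw [hfj]; simpa using hmem1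
        have hTs : T g (j + 1) = T g j := by rw [T_succ, hbit]; simp
        have hval : v a g (j + 1) = c - 1 := by
          rw [v, show e g (j + 1) = -((j + 1 - T g (j + 1) : ℕ) : ℤ) from by
            rw [e, if_neg (by simp [hbit])], hTs, hc]
          have hcast : ((j + 1 - T g j : ℕ) : ZMod (n + 2))
              = ((j - T g j : ℕ) : ZMod (n + 2)) + 1 := by
            rw [show j + 1 - T g j = (j - T g j) + 1 by omega]
            push_cast; ring
          push_cast at hcast ⊢
          linear_combination -hcast
        constructor
        · intro i hi
          rcases Nat.lt_or_ge i (j + 1) with h | h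
          · exact ihv i (by omega)
          · have : i = j + 1 := by omega
            subst this
            rw [← hxdef, hxc, ← hval]
        · have hstart : a - ((j + 1 - T g (j + 1) : ℕ) : ZMod (n + 2)) = c - 1 := by
            rw [hTs, hc, show j + 1 - T g j = (j - T g j) + 1 by omega]
            push_cast; ring
          rw [P2eq, hc'', hstart]
  obtain ⟨hv, -⟩ := claim n le_rfl
  refine ⟨a, f, ?_⟩
  have hoff : ∀ x : ZMod (n + 2), x ≠ (((n + 1 : ℕ)) : ZMod (n + 2)) → D n a f x = π x := by
    intro x hx
    have hxval : x.val ≤ n := by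
      have h1 : x.val < n + 2 := ZMod.val_lt x
      rcases Nat.lt_or_ge x.val (n + 1) with h | h
      · omega
      · exfalso
        apply hx
        have : x.val = n + 1 := by omega
        rw [← this, ZMod.natCast_rightInverse x]
    rw [D_apply, ← hg, ← hv x.val hxval, ZMod.natCast_rightInverse x]
  apply Equiv.ext
  intro x
  by_cases hx : x = (((n + 1 : ℕ)) : ZMod (n + 2))
  · subst hx
    exact perm_apply_eq_of_forall_ne _ _ _ hoff
  · exact hoff x hx

end ArcAux

/-- The number of arc permutations in `S_n` is `n·2^(n-2)`, for `n ≥ 2`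
(here `n` is `n+2`). -/
theorem stmt1 (n : ℕ) :
    Nat.card {π : Equiv.Perm (ZMod (n + 2)) // IsArcPerm π} = (n + 2) * 2 ^ n := by
  have hbij : Function.Bijective (fun p : ZMod (n + 2) × (Fin n → Bool) =>
      (⟨ArcAux.D n p.1 p.2, ArcAux.isArcPerm_D n p.1 p.2⟩ :
        {π : Equiv.Perm (ZMod (n + 2)) // IsArcPerm π})) := by
    constructor
    · intro p q h
      exact ArcAux.D_injective n (Subtype.ext_iff.mp h)
    · rintro ⟨π, hπ⟩
      obtain ⟨a, f, hD⟩ := ArcAux.D_surjective n π hπ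
      exact ⟨(a, f), Subtype.ext hD⟩
  rw [← Nat.card_eq_of_bijective _ hbij]
  simp [Nat.card_eq_fintype_card, Fintype.card_fun, ZMod.card]
end

section
/- Let H ≤ G be finite groups, and suppose every double coset HgH of H in G satisfies (HgH)^{-1} = HgH. Then the permutation representation of G on the cosets of H is multiplicity-free. -/
/-- A linear endomorphism of the space of complex-valued functions on `X` is
`G`-equivariant if it commutes with the natural action of `G` on functions. -/
def IsEquivariantMap (G X : Type*) [Group G] [MulAction G X]
    (f : (X → ℂ) →ₗ[ℂ] (X → ℂ)) : Prop :=
  ∀ (g : G) (v : X → ℂ), f (fun x => v (g⁻¹ • x)) = fun x => f v (g⁻¹ • x)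

/-- The permutation representation of `G` on `X` is multiplicity-free:
equivalently, its commutant algebra is commutative. -/
def IsMultFreeAction (G X : Type*) [Group G] [MulAction G X] : Prop :=
  ∀ f₁ f₂ : (X → ℂ) →ₗ[ℂ] (X → ℂ),
    IsEquivariantMap G X f₁ → IsEquivariantMap G X f₂ → f₁ ∘ₗ f₂ = f₂ ∘ₗ f₁

section Aux
variable {G : Type*} [Group G] [Fintype G] (H : Subgroup G)

noncomputable instance : Fintype (G ⧸ H) := Fintype.ofFinite _
noncomputable instance : DecidableEq (G ⧸ H) := Classical.decEq _

noncomputable def gker (f : (G ⧸ H → ℂ) →ₗ[ℂ] (G ⧸ H → ℂ)) (x y : G ⧸ H) : ℂ :=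
  f (fun z => if z = y then 1 else 0) x

lemma gker_apply (f : (G ⧸ H → ℂ) →ₗ[ℂ] (G ⧸ H → ℂ)) (v : G ⧸ H → ℂ) (x : G ⧸ H) :
    f v x = ∑ y, v y * gker H f x y := by
  have hv : v = ∑ y : G ⧸ H, v y • (fun z => if z = y then (1:ℂ) else 0) := by
    funext z
    simp [Finset.sum_apply]
  conv_lhs => rw [hv]
  rw [map_sum]
  simp [Finset.sum_apply, gker]

lemma gker_smul (f : (G ⧸ H → ℂ) →ₗ[ℂ] (G ⧸ H → ℂ)) (hf : IsEquivariantMap G (G ⧸ H) f)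
    (g : G) (x y : G ⧸ H) : gker H f (g • x) (g • y) = gker H f x y := by
  have h1 : (fun z : G ⧸ H => if z = g • y then (1:ℂ) else 0)
      = fun z => (fun w => if w = y then (1:ℂ) else 0) (g⁻¹ • z) := by
    funext z
    simp [inv_smul_eq_iff]
  have h2 := congrFun (hf g (fun w => if w = y then (1:ℂ) else 0)) (g • x)
  simp only [inv_smul_smul] at h2
  unfold gker
  rw [h1]
  exact h2


lemma gker_symm (f : (G ⧸ H → ℂ) →ₗ[ℂ] (G ⧸ H → ℂ)) (hf : IsEquivariantMap G (G ⧸ H) f)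
    (h : ∀ g : G,
      (DoubleCoset.doubleCoset g (H : Set G) (H : Set G))⁻¹ = DoubleCoset.doubleCoset g (H : Set G) (H : Set G))
    (x y : G ⧸ H) : gker H f x y = gker H f y x := by
  -- key: for any c, gker f ⟦1⟧ ⟦c⟧ = gker f ⟦1⟧ ⟦c⁻¹⟧
  have key : ∀ c : G, gker H f ((1 : G) : G ⧸ H) ((c : G) : G ⧸ H)
      = gker H f ((1 : G) : G ⧸ H) ((c⁻¹ : G) : G ⧸ H) := by
    intro c
    have hc : c⁻¹ ∈ DoubleCoset.doubleCoset c (H : Set G) (H : Set G) := by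
      rw [← h c, Set.mem_inv, inv_inv]
      exact DoubleCoset.mem_doubleCoset_self _ _ c
    rw [DoubleCoset.mem_doubleCoset] at hc
    obtain ⟨h₁, hh₁, h₂, hh₂, hch⟩ := hc
    have e1 : ((c⁻¹ : G) : G ⧸ H) = ((h₁ * c : G) : G ⧸ H) := by
      rw [hch]
      exact QuotientGroup.mk_mul_of_mem _ hh₂
    rw [e1]
    have := gker_smul H f hf h₁⁻¹ ((h₁ : G) : G ⧸ H) ((h₁ * c : G) : G ⧸ H)
    have e2 : (h₁⁻¹ : G) • ((h₁ : G) : G ⧸ H) = ((1 : G) : G ⧸ H) := by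
      show ((h₁⁻¹ * h₁ : G) : G ⧸ H) = _
      rw [inv_mul_cancel]
    have e3 : (h₁⁻¹ : G) • ((h₁ * c : G) : G ⧸ H) = ((c : G) : G ⧸ H) := by
      show ((h₁⁻¹ * (h₁ * c) : G) : G ⧸ H) = _
      rw [inv_mul_cancel_left]
    rw [e2, e3] at this
    have e5 : ((h₁ : G) : G ⧸ H) = ((1 : G) : G ⧸ H) :=
      QuotientGroup.eq.mpr (by simpa using H.inv_mem hh₁)
    rw [this, e5]
  induction x using QuotientGroup.induction_on with
  | _ a =>
  induction y using QuotientGroup.induction_on with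
  | _ b =>
  have t1 := gker_smul H f hf a⁻¹ ((a : G) : G ⧸ H) ((b : G) : G ⧸ H)
  have t2 := gker_smul H f hf b⁻¹ ((b : G) : G ⧸ H) ((a : G) : G ⧸ H)
  have sa : (a⁻¹ : G) • ((a : G) : G ⧸ H) = ((1:G) : G ⧸ H) := by
    show ((a⁻¹ * a : G) : G ⧸ H) = _; rw [inv_mul_cancel]
  have sb : (a⁻¹ : G) • ((b : G) : G ⧸ H) = ((a⁻¹ * b : G) : G ⧸ H) := rfl
  have sc : (b⁻¹ : G) • ((b : G) : G ⧸ H) = ((1:G) : G ⧸ H) := by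
    show ((b⁻¹ * b : G) : G ⧸ H) = _; rw [inv_mul_cancel]
  have sd : (b⁻¹ : G) • ((a : G) : G ⧸ H) = ((b⁻¹ * a : G) : G ⧸ H) := rfl
  rw [sa, sb] at t1
  rw [sc, sd] at t2
  rw [← t1, ← t2, key (a⁻¹ * b)]
  congr 2
  rw [mul_inv_rev, inv_inv]

end Aux

/-- Gelfand's trick: if every double coset of `H` in the finite group `G` is
closed under inversion, then the permutation representation of `G` on the
cosets of `H` is multiplicity-free. -/
theorem stmt2 {G : Type*} [Group G] [Fintype G] (H : Subgroup G)
    (h : ∀ g : G,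
      (DoubleCoset.doubleCoset g (H : Set G) (H : Set G))⁻¹ = DoubleCoset.doubleCoset g (H : Set G) (H : Set G)) :
    IsMultFreeAction G (G ⧸ H) := by
  intro f₁ f₂ h₁ h₂
  have hcomp : ∀ (a b : (G ⧸ H → ℂ) →ₗ[ℂ] (G ⧸ H → ℂ)),
      IsEquivariantMap G (G ⧸ H) a → IsEquivariantMap G (G ⧸ H) b →
      IsEquivariantMap G (G ⧸ H) (a ∘ₗ b) := by
    intro a b ha hb g v
    rw [LinearMap.comp_apply, hb g v, ha g (b v), LinearMap.comp_apply]
  have kcomp : ∀ (a b : (G ⧸ H → ℂ) →ₗ[ℂ] (G ⧸ H → ℂ)) (x z : G ⧸ H),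
      gker H (a ∘ₗ b) x z = ∑ y, gker H b y z * gker H a x y := by
    intro a b x z
    show (a ∘ₗ b) (fun w => if w = z then 1 else 0) x = _
    rw [LinearMap.comp_apply, gker_apply]
    rfl
  have keq : ∀ x z, gker H (f₁ ∘ₗ f₂) x z = gker H (f₂ ∘ₗ f₁) x z := by
    intro x z
    rw [gker_symm H _ (hcomp f₁ f₂ h₁ h₂) h x z, kcomp, kcomp]
    apply Finset.sum_congr rfl
    intro y _
    rw [gker_symm H f₂ h₂ h y x, gker_symm H f₁ h₁ h z y, mul_comm]
  apply LinearMap.ext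
  intro v
  funext x
  rw [gker_apply H (f₁ ∘ₗ f₂), gker_apply H (f₂ ∘ₗ f₁)]
  exact Finset.sum_congr rfl fun z _ => by rw [keq x z]
end

section
/- Let H ≤ G be (possibly infinite) groups such that every double coset of H in G contains an involution (an element g with g² = 1, allowing g = 1). Then for every surjective homomorphism φ of G onto a finite group, the pair (φ(G), φ(H)) is a Gelfand pair, i.e., the permutation representation of φ(G) on the cosets of φ(H) is multiplicity-free. -/
/-- Gelfand's trick, abstract form: if for all `x y` in a finite `G`-set `X`
there is a group element swapping `x` and `y`, then the action is
multiplicity-free. -/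
theorem multFree_of_swap {G X : Type*} [Group G] [MulAction G X] [Fintype X] [DecidableEq X]
    (hswap : ∀ x y : X, ∃ g : G, g • x = y ∧ g • y = x) : IsMultFreeAction G X := by
  classical
  set δ : X → X → ℂ := fun y z => if z = y then 1 else 0 with hδ
  -- reconstruction from the kernel
  have hrecon : ∀ (f : (X → ℂ) →ₗ[ℂ] (X → ℂ)) (v : X → ℂ) (x : X),
      f v x = ∑ y, v y * f (δ y) x := by
    intro f v x
    have hv : v = ∑ y, v y • δ y := by
      funext z
      simp [hδ, Finset.sum_apply]
    conv_lhs => rw [hv]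
    rw [map_sum]
    simp [Finset.sum_apply]
  -- equivariance of the kernel
  have hker : ∀ (f : (X → ℂ) →ₗ[ℂ] (X → ℂ)), IsEquivariantMap G X f →
      ∀ (g : G) (x y : X), f (δ (g • y)) (g • x) = f (δ y) x := by
    intro f hf g x y
    have h2 : (fun z => δ y (g⁻¹ • z)) = δ (g • y) := by
      funext z
      simp only [hδ]
      by_cases hz : z = g • y
      · simp [hz]
      · rw [if_neg hz, if_neg]
        intro hc
        exact hz (by rw [← hc, smul_inv_smul])
    have h1 := hf g (δ y)
    rw [h2] at h1
    rw [h1]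
    simp
  -- symmetry of the kernel
  have hsym : ∀ (f : (X → ℂ) →ₗ[ℂ] (X → ℂ)), IsEquivariantMap G X f →
      ∀ (x y : X), f (δ y) x = f (δ x) y := by
    intro f hf x y
    obtain ⟨g, hgx, hgy⟩ := hswap x y
    have := hker f hf g x y
    rw [hgx, hgy] at this
    exact this.symm
  -- composition is equivariant
  have hcompEq : ∀ (f₁ f₂ : (X → ℂ) →ₗ[ℂ] (X → ℂ)),
      IsEquivariantMap G X f₁ → IsEquivariantMap G X f₂ →
      IsEquivariantMap G X (f₁ ∘ₗ f₂) := by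
    intro f₁ f₂ hf₁ hf₂ g v
    simp only [LinearMap.comp_apply]
    rw [hf₂ g v, hf₁ g (f₂ v)]
  intro f₁ f₂ hf₁ hf₂
  -- kernels of the two compositions agree
  have hkereq : ∀ x y : X, (f₁ ∘ₗ f₂) (δ y) x = (f₂ ∘ₗ f₁) (δ y) x := by
    intro x y
    have s12 := hsym _ (hcompEq f₁ f₂ hf₁ hf₂) x y
    calc (f₁ ∘ₗ f₂) (δ y) x = (f₁ ∘ₗ f₂) (δ x) y := s12
    _ = f₁ (f₂ (δ x)) y := rfl
    _ = ∑ z, f₂ (δ x) z * f₁ (δ z) y := hrecon f₁ (f₂ (δ x)) y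
    _ = ∑ z, f₁ (δ y) z * f₂ (δ z) x := by
        refine Finset.sum_congr rfl fun z _ => ?_
        rw [hsym f₂ hf₂ z x, hsym f₁ hf₁ y z, mul_comm]
    _ = f₂ (f₁ (δ y)) x := (hrecon f₂ (f₁ (δ y)) x).symm
    _ = (f₂ ∘ₗ f₁) (δ y) x := rfl
  refine LinearMap.ext fun v => funext fun x => ?_
  rw [hrecon (f₁ ∘ₗ f₂) v x, hrecon (f₂ ∘ₗ f₁) v x]
  exact Finset.sum_congr rfl fun y _ => by rw [hkereq x y]

/-- If every double coset of `H` in `G` contains an involution, then for every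
surjection `φ` of `G` onto a finite group, `(φ(G), φ(H))` is a Gelfand pair,
i.e. the permutation representation of `φ(G)` on the cosets of `φ(H)` is
multiplicity-free. -/
theorem stmt3 {G : Type*} [Group G] (H : Subgroup G)
    (h : ∀ g : G, ∃ x ∈ DoubleCoset.doubleCoset g (H : Set G) (H : Set G), x * x = 1) :
    ∀ (G₁ : Type*) [Group G₁] [Finite G₁] (φ : G →* G₁), Function.Surjective φ →
      IsMultFreeAction G₁ (G₁ ⧸ Subgroup.map φ H) := by
  intro G₁ _ _ φ hφ
  have : Fintype (G₁ ⧸ Subgroup.map φ H) := Fintype.ofFinite _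
  classical
  apply multFree_of_swap
  intro x y
  obtain ⟨a, rfl⟩ := QuotientGroup.mk_surjective x
  obtain ⟨b, rfl⟩ := QuotientGroup.mk_surjective y
  obtain ⟨a', rfl⟩ := hφ a
  obtain ⟨b', rfl⟩ := hφ b
  obtain ⟨t, ht, ht2⟩ := h (a'⁻¹ * b')
  rw [DoubleCoset.mem_doubleCoset] at ht
  obtain ⟨h₁, hh₁, h₂, hh₂, heq⟩ := ht
  have htinv : t⁻¹ = t := inv_eq_of_mul_eq_one_right ht2
  set g' : G := a' * h₁⁻¹ * t * h₁ * a'⁻¹ with hg'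
  have hab : a'⁻¹ * b' = h₁⁻¹ * t * h₂⁻¹ := by rw [heq]; group
  have hba : b'⁻¹ * a' = h₂ * t⁻¹ * h₁ := by rw [heq]; group
  have key1 : (g' * a')⁻¹ * b' = h₁⁻¹ * h₂⁻¹ := by
    have e1 : (g' * a')⁻¹ * b' = h₁⁻¹ * t⁻¹ * h₁ * (a'⁻¹ * b') := by rw [hg']; group
    rw [e1, hab]
    have e2 : h₁⁻¹ * t⁻¹ * h₁ * (h₁⁻¹ * t * h₂⁻¹) = h₁⁻¹ * (t⁻¹ * t) * h₂⁻¹ := by group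
    rw [e2, inv_mul_cancel, mul_one]
  have key2 : (g' * b')⁻¹ * a' = h₂ * h₁ := by
    have e1 : (g' * b')⁻¹ * a' = (b'⁻¹ * a') * (a'⁻¹ * (g'⁻¹ * a')) := by group
    have e2 : g'⁻¹ = a' * h₁⁻¹ * t⁻¹ * h₁ * a'⁻¹ := by rw [hg']; group
    rw [e1, e2, hba]
    have e3 : h₂ * t⁻¹ * h₁ * (a'⁻¹ * (a' * h₁⁻¹ * t⁻¹ * h₁ * a'⁻¹ * a'))
        = h₂ * (t⁻¹ * t⁻¹) * h₁ := by group
    rw [e3, htinv, ht2, mul_one]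
  refine ⟨φ g', ?_, ?_⟩
  · show QuotientGroup.mk (φ g' * φ a') = QuotientGroup.mk (φ b')
    rw [QuotientGroup.eq]
    have : (φ g' * φ a')⁻¹ * φ b' = φ ((g' * a')⁻¹ * b') := by
      simp only [← map_mul, ← map_inv]
    rw [this, key1]
    exact ⟨h₁⁻¹ * h₂⁻¹, H.mul_mem (H.inv_mem hh₁) (H.inv_mem hh₂), rfl⟩
  · show QuotientGroup.mk (φ g' * φ b') = QuotientGroup.mk (φ a')
    rw [QuotientGroup.eq]
    have : (φ g' * φ b')⁻¹ * φ a' = φ ((g' * b')⁻¹ * a') := by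
      simp only [← map_mul, ← map_inv]
    rw [this, key2]
    exact ⟨h₂ * h₁, H.mul_mem hh₂ hh₁, rfl⟩
end
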